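/- arXiv:1504.02989 — 5 statements merged into one kernel-verified Lean document; each statement's English description precedes it below -/
import Mathlib

section
/- Let n ≥ 4, m = (m_1,…,m_n) ∈ ℝ^n with m_0 := 1, and let Y ∈ ℕ₀ be such that c := (m_2 − (2Y+1)m_1 + Y(Y+1))^{-1} is well defined and positive. Define M_i := c·(m_{i+2} − (2Y+1)m_{i+1} + Y(Y+1)m_i) for i = 0,…,n−2 (so M_0 = 1). If the probability measure σ on ℕ₀ realizes (m_1,…,m_n) (i.e., E_σ[X^k] = m_k for k = 0,…,n), then the measure σ′ defined by dσ′(x) = c·(x−Y)(x−Y−1)·dσ(x) is a probability measure on ℕ₀ realizing (M_1,…,M_{n−2}). -/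
open Polynomial

/-- Lemma 6.5(a): if `σ` realizes `(m_1,…,m_n)` on `ℕ₀` and
`c = (m_2 - (2Y+1)m_1 + Y(Y+1))⁻¹ > 0`, then
`dσ'(x) = c (x-Y)(x-Y-1) dσ(x)` is a probability measure on `ℕ₀` realizing
`M_i = c (m_{i+2} - (2Y+1) m_{i+1} + Y(Y+1) m_i)` for `i ≤ n-2`. -/
theorem transformed_measure_realizes (n : ℕ) (hn : 4 ≤ n) (m : ℕ → ℝ)
    (hm0 : m 0 = 1) (Y : ℕ)
    (hden : 0 < m 2 - (2 * (Y : ℝ) + 1) * m 1 + (Y : ℝ) * ((Y : ℝ) + 1))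
    (c : ℝ) (hc : c = (m 2 - (2 * (Y : ℝ) + 1) * m 1 + (Y : ℝ) * ((Y : ℝ) + 1))⁻¹)
    (σ : ℕ → ℝ) (hσ0 : ∀ x, 0 ≤ σ x)
    (hσ : ∀ k, k ≤ n → HasSum (fun x : ℕ => (x : ℝ) ^ k * σ x) (m k)) :
    (∀ x : ℕ, 0 ≤ c * ((x : ℝ) - (Y : ℝ)) * ((x : ℝ) - (Y : ℝ) - 1) * σ x) ∧
      ∀ i, i ≤ n - 2 →
        HasSum (fun x : ℕ =>
            (x : ℝ) ^ i * (c * ((x : ℝ) - (Y : ℝ)) * ((x : ℝ) - (Y : ℝ) - 1) * σ x))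
          (c * (m (i + 2) - (2 * (Y : ℝ) + 1) * m (i + 1) +
            (Y : ℝ) * ((Y : ℝ) + 1) * m i)) := by
  have hcpos : 0 < c := hc ▸ inv_pos.mpr hden
  have hfac : ∀ x : ℕ, 0 ≤ ((x : ℝ) - (Y : ℝ)) * ((x : ℝ) - (Y : ℝ) - 1) := by
    intro x
    rcases le_or_gt x Y with h | h
    · have h1 : (x : ℝ) ≤ (Y : ℝ) := by exact_mod_cast h
      nlinarith
    · have h1 : (Y : ℝ) + 1 ≤ (x : ℝ) := by exact_mod_cast h
      exact mul_nonneg (by linarith) (by linarith)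
  constructor
  · intro x
    have := mul_nonneg (mul_nonneg hcpos.le (hfac x)) (hσ0 x)
    linarith [this]
  · intro i hi
    have h2 : i + 2 ≤ n := by omega
    have hS := ((((hσ (i + 2) h2).sub
        ((hσ (i + 1) (by omega)).mul_left (2 * (Y : ℝ) + 1))).add
        ((hσ i (by omega)).mul_left ((Y : ℝ) * ((Y : ℝ) + 1)))).mul_left c)
    convert hS using 2 with x
    · rfl
    push_cast
    ring
end

section
/- Let n ≥ 1, q := ⌊n/2⌋, i₀ := n − 2q, and m = (m_1,…,m_n) ∈ ℝ^n with m_0 := 1. Suppose L_P(m) ≥ 0 for all P ∈ 𝒫_n. Let l and p₀ be integers with 0 ≤ l < q and 0 ≤ p₀ ≤ 2(q−l), and let Q ∈ 𝒫_{i₀+2l} satisfy L_{x^p Q}(m) = 0 for all 0 ≤ p < p₀. Then (−1)^{p₀} · L_{x^{p₀} Q}(m) ≥ 0. -/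
open Polynomial

/-- `Lf P m = Σ_k p_k m_k`, the affine form associated to a polynomial `P`. -/
noncomputable def Lf (P : Polynomial ℝ) (m : ℕ → ℝ) : ℝ := P.sum fun k a => a * m k

/-- `𝒫_j`: monic real polynomials of degree `j` with `j` distinct roots in `ℕ₀`,
nonnegative on `ℕ₀`. -/
def PolyP (j : ℕ) (P : Polynomial ℝ) : Prop :=
  P.Monic ∧ P.natDegree = j ∧
    (∃ S : Finset ℕ, S.card = j ∧ P = ∏ a ∈ S, (X - C (a : ℝ))) ∧
    ∀ x : ℕ, 0 ≤ P.eval (x : ℝ)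

/-- `(m_1,…,m_j)` (with `m 0 = 1`) is realizable on `ℕ₀`: there is a probability
measure on the nonnegative integers whose `k`-th moment is `m k` for `k ≤ j`. -/
def RealizableN0 (j : ℕ) (m : ℕ → ℝ) : Prop :=
  ∃ μ : ℕ → ℝ, (∀ x, 0 ≤ μ x) ∧
    ∀ k, k ≤ j → HasSum (fun x : ℕ => (x : ℝ) ^ k * μ x) (m k)

/-- I-realizability on `ℕ₀`. -/
def IRealizable (j : ℕ) (m : ℕ → ℝ) : Prop :=
  RealizableN0 j m ∧ ∀ P : Polynomial ℝ, PolyP j P ∨ PolyP (j - 1) P → 0 < Lf P m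

/-- B-realizability on `ℕ₀`. -/
def BRealizable (j : ℕ) (m : ℕ → ℝ) : Prop :=
  RealizableN0 j m ∧ ∃ P : Polynomial ℝ, (PolyP j P ∨ PolyP (j - 1) P) ∧ Lf P m = 0

namespace SignAux

noncomputable def LfL (m : ℕ → ℝ) : Polynomial ℝ →ₗ[ℝ] ℝ :=
  Polynomial.lsum (fun k => LinearMap.toSpanSingleton ℝ ℝ (m k))

lemma Lf_eq (P : Polynomial ℝ) (m : ℕ → ℝ) : Lf P m = LfL m P := by
  simp [Lf, LfL, Polynomial.lsum_apply, LinearMap.toSpanSingleton_apply, smul_eq_mul]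

lemma Lf_mul_expand (m : ℕ → ℝ) (M W : Polynomial ℝ) (N : ℕ) (hM : M.natDegree < N) :
    Lf (M * W) m = ∑ p ∈ Finset.range N, M.coeff p * Lf (X ^ p * W) m := by
  conv_lhs => rw [M.as_sum_range' N hM, Finset.sum_mul]
  rw [Lf_eq, map_sum]
  refine Finset.sum_congr rfl fun p _ => ?_
  have hmono : (monomial p (M.coeff p)) * W = (M.coeff p) • (X ^ p * W) := by
    rw [← C_mul_X_pow_eq_monomial, smul_eq_C_mul, mul_assoc]
  rw [hmono, map_smul, smul_eq_mul, ← Lf_eq]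

lemma coeff_comp_neg_X (H : Polynomial ℝ) (k : ℕ) :
    (H.comp (-X)).coeff k = (-1 : ℝ) ^ k * H.coeff k := by
  induction H using Polynomial.induction_on' with
  | add p q hp hq => simp [add_comp, hp, hq, mul_add]
  | monomial i a =>
    have h1 : (monomial i a).comp (-X) = C (a * (-1) ^ i) * X ^ i := by
      rw [monomial_comp, neg_pow, ← C_1, ← C_neg, ← C_pow, ← mul_assoc, ← C_mul]
    rw [h1, coeff_C_mul, coeff_X_pow]
    by_cases hik : i = k
    · subst hik; simp [coeff_monomial]; ring
    · simp [coeff_monomial, hik, Ne.symm hik]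

lemma exists_initial_avoid (S : Finset ℕ) (r : ℕ) :
    ∃ R : Finset ℕ, R.card = r ∧ (∀ a ∈ R, a ∉ S) ∧
      ∀ x : ℕ, x ∉ S → x ∉ R → ∀ y ∈ R, y < x := by
  induction r with
  | zero => exact ⟨∅, by simp, by simp, by simp⟩
  | succ r ih =>
    obtain ⟨R, hcard, hdisj, hinit⟩ := ih
    have hex : ∃ x : ℕ, x ∉ S ∧ x ∉ R := by
      refine ⟨(S ∪ R).sup id + 1, fun hmem => ?_, fun hmem => ?_⟩
      · have h1 := Finset.le_sup (f := id) (Finset.mem_union_left R hmem)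
        simp only [id] at h1
        omega
      · have h1 := Finset.le_sup (f := id) (Finset.mem_union_right S hmem)
        simp only [id] at h1
        omega
    obtain ⟨hx₀S, hx₀R⟩ := Nat.find_spec hex
    refine ⟨insert (Nat.find hex) R, ?_, ?_, ?_⟩
    · rw [Finset.card_insert_of_notMem hx₀R, hcard]
    · intro a ha
      rcases Finset.mem_insert.1 ha with rfl | ha
      · exact hx₀S
      · exact hdisj a ha
    · intro x hxS hxR y hy
      have hxR' : x ∉ R := fun hh => hxR (Finset.mem_insert_of_mem hh)
      rcases Finset.mem_insert.1 hy with rfl | hy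
      · have h1 : Nat.find hex ≤ x := Nat.find_min' hex ⟨hxS, hxR'⟩
        have h2 : x ≠ Nat.find hex := fun hh => hxR (by rw [hh]; exact Finset.mem_insert_self _ _)
        omega
      · exact hinit x hxS hxR' y hy

lemma coeff_nonneg_of_eventually_nonneg (G : Polynomial ℝ) (N c₀ : ℕ)
    (hdeg : G.natDegree ≤ N) (hpos : ∀ c : ℕ, c₀ ≤ c → 0 ≤ G.eval (c : ℝ)) :
    0 ≤ G.coeff N := by
  rcases lt_or_eq_of_le hdeg with hlt | heq
  · rw [coeff_eq_zero_of_natDegree_lt hlt]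
  · by_contra hneg
    push_neg at hneg
    have hGne : G ≠ 0 := fun hh => by simp [hh] at hneg
    have hlc : G.leadingCoeff < 0 := by rw [leadingCoeff, heq]; exact hneg
    rcases Nat.eq_zero_or_pos N with hN0 | hNpos
    · have : G = C (G.coeff 0) := eq_C_of_natDegree_eq_zero (by omega)
      have h1 := hpos c₀ le_rfl
      rw [this] at h1
      simp only [eval_C] at h1
      rw [hN0] at hneg
      linarith
    · have hdegpos : 0 < G.degree := by
        rw [← natDegree_pos_iff_degree_pos]; omega
      have htend : Filter.Tendsto (fun x : ℝ => G.eval x) Filter.atTop Filter.atBot :=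
        G.tendsto_atBot_of_leadingCoeff_nonpos hdegpos hlc.le
      have htendn : Filter.Tendsto (fun c : ℕ => G.eval (c : ℝ)) Filter.atTop Filter.atBot :=
        htend.comp tendsto_natCast_atTop_atTop
      obtain ⟨c, hc1, hc2⟩ :=
        ((htendn.eventually_le_atBot (-1)).and (Filter.eventually_ge_atTop c₀)).exists
      have := hpos c hc2
      linarith

end SignAux

/-- Lemma 3.7: with `q = ⌊n/2⌋` and `i₀ = n - 2q`, if `L_P(m) ≥ 0` for all
`P ∈ 𝒫_n`, `0 ≤ l < q`, `0 ≤ p₀ ≤ 2(q-l)`, and `Q ∈ 𝒫_{i₀+2l}` satisfies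
`L_{x^p Q}(m) = 0` for all `p < p₀`, then `(-1)^{p₀} L_{x^{p₀}Q}(m) ≥ 0`. -/
theorem sign_lemma (n : ℕ) (hn : 1 ≤ n) (m : ℕ → ℝ) (hm0 : m 0 = 1)
    (h : ∀ P, PolyP n P → 0 ≤ Lf P m)
    (l p0 : ℕ) (hl : l < n / 2) (hp0 : p0 ≤ 2 * (n / 2 - l))
    (Q : Polynomial ℝ) (hQ : PolyP ((n - 2 * (n / 2)) + 2 * l) Q)
    (hzero : ∀ p, p < p0 → Lf (X ^ p * Q) m = 0) :
    0 ≤ (-1 : ℝ) ^ p0 * Lf (X ^ p0 * Q) m := by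
  classical
  obtain ⟨hQmon, hQdeg, ⟨S, hScard, hSprod⟩, hQnn⟩ := hQ
  set ε := p0 % 2 with hε
  set r := p0 - ε with hr
  set K := 2 * (n / 2 - l) - r with hKdef
  have hεK : ε ≤ K := by omega
  have hKeven : Even K := by rw [Nat.even_iff]; omega
  -- the small block T with roots the first r naturals avoiding S
  obtain ⟨R, hRcard, hRS, hRinit⟩ := SignAux.exists_initial_avoid S r
  set T : Polynomial ℝ := ∏ a ∈ R, (X - C (a : ℝ)) with hT
  have hTmon : T.Monic := monic_prod_of_monic _ _ fun _ _ => monic_X_sub_C _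
  have hTdeg : T.natDegree = r := by
    rw [hT, natDegree_prod_of_monic _ _ fun _ _ => monic_X_sub_C _]
    simp only [natDegree_X_sub_C, Finset.sum_const, smul_eq_mul, mul_one]
    exact hRcard
  set E : Polynomial ℝ := ∏ j ∈ Finset.range K, (X - C (j : ℝ)) with hE
  have hEmon : E.Monic := monic_prod_of_monic _ _ fun _ _ => monic_X_sub_C _
  have hEdeg : E.natDegree = K := by
    rw [hE, natDegree_prod_of_monic _ _ fun _ _ => monic_X_sub_C _]
    simp only [natDegree_X_sub_C, Finset.sum_const, smul_eq_mul, mul_one]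
    exact Finset.card_range K
  set c₀ := (S ∪ R).sup id + 1 with hc₀
  -- values of the auxiliary moments
  have hwval : ∀ p, p ≤ ε →
      Lf (X ^ p * (T * Q)) m = (X ^ p * T).coeff p0 * Lf (X ^ p0 * Q) m := by
    intro p hp
    have hdeg : (X ^ p * T).natDegree < p0 + 1 := by
      rw [(monic_X_pow p).natDegree_mul hTmon, natDegree_X_pow, hTdeg]; omega
    have hexp := SignAux.Lf_mul_expand m (X ^ p * T) Q (p0 + 1) hdeg
    have hz : ∑ s ∈ Finset.range p0, (X ^ p * T).coeff s * Lf (X ^ s * Q) m = 0 :=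
      Finset.sum_eq_zero fun s hs => by rw [hzero s (Finset.mem_range.1 hs), mul_zero]
    rw [← mul_assoc, hexp, Finset.sum_range_succ, hz, zero_add]
  have hw0 : ∀ p, p < ε → Lf (X ^ p * (T * Q)) m = 0 := by
    intro p hp
    have hp' : p = 0 ∧ ε = 1 := by omega
    rw [hwval p hp.le, hp'.1, pow_zero, one_mul,
      coeff_eq_zero_of_natDegree_lt (show T.natDegree < p0 by rw [hTdeg]; omega), zero_mul]
  have hwε : Lf (X ^ ε * (T * Q)) m = Lf (X ^ p0 * Q) m := by
    rw [hwval ε le_rfl]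
    have hrε : p0 = r + ε := by omega
    have hcoef : (X ^ ε * T).coeff p0 = 1 := by
      rw [hrε, coeff_X_pow_mul, ← hTdeg, hTmon.coeff_natDegree]
    rw [hcoef, one_mul]
  -- the scaled far block
  have hBprod : ∀ c : ℕ, (Polynomial.taylor (-(c : ℝ)) E : Polynomial ℝ)
      = ∏ j ∈ Finset.range K, (X - C ((c : ℝ) + (j : ℝ))) := by
    intro c
    rw [Polynomial.taylor_apply, hE, Polynomial.prod_comp]
    refine Finset.prod_congr rfl fun j _ => ?_
    rw [sub_comp, X_comp, C_comp, C_neg, C_add]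
    ring
  -- nonnegativity
  have hpos : ∀ c : ℕ, c₀ ≤ c →
      0 ≤ Lf ((Polynomial.taylor (-(c : ℝ)) E : Polynomial ℝ) * (T * Q)) m := by
    intro c hc
    set B : Polynomial ℝ := (Polynomial.taylor (-(c : ℝ)) E : Polynomial ℝ) with hB
    set U : Finset ℕ := (S ∪ R) ∪ (Finset.range K).image (fun j => c + j) with hU
    have hblock : ∀ b ∈ (Finset.range K).image (fun j => c + j), c ≤ b := by
      intro b hb
      obtain ⟨j, hj, rfl⟩ := Finset.mem_image.1 hb
      omega
    have hdisj1 : Disjoint S R := Finset.disjoint_right.2 fun a ha => hRS a ha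
    have hdisj2 : Disjoint (S ∪ R) ((Finset.range K).image (fun j => c + j)) := by
      rw [Finset.disjoint_right]
      intro b hb hbSR
      have h1 := Finset.le_sup (f := id) hbSR
      have h2 := hblock b hb
      simp only [id] at h1
      omega
    have hUcard : U.card = n := by
      rw [hU, Finset.card_union_of_disjoint hdisj2, Finset.card_union_of_disjoint hdisj1,
        Finset.card_image_of_injective _ (add_right_injective c), Finset.card_range,
        hScard, hRcard]
      omega
    have hprodU : (∏ a ∈ U, (X - C (a : ℝ))) = B * (T * Q) := by
      rw [hU, Finset.prod_union hdisj2, Finset.prod_union hdisj1,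
        Finset.prod_image (fun a _ b _ hab => by omega)]
      have hcast : ∏ j ∈ Finset.range K, (X - C (((c + j : ℕ)) : ℝ))
          = ∏ j ∈ Finset.range K, (X - C ((c : ℝ) + (j : ℝ))) := by
        refine Finset.prod_congr rfl fun j _ => by push_cast; ring
      rw [hcast, ← hSprod, ← hT, hB, hBprod c]
      ring
    have hPoly : PolyP n (B * (T * Q)) := by
      refine ⟨?_, ?_, ⟨U, hUcard, hprodU.symm⟩, ?_⟩
      · rw [← hprodU]
        exact monic_prod_of_monic _ _ fun _ _ => monic_X_sub_C _
      · rw [← hprodU, natDegree_prod_of_monic _ _ fun _ _ => monic_X_sub_C _]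
        simp only [natDegree_X_sub_C, Finset.sum_const, smul_eq_mul, mul_one]
        exact hUcard
      · intro x
        rw [eval_mul]
        have hBnn : 0 ≤ B.eval (x : ℝ) := by
          rw [hB, hBprod c, eval_prod]
          simp only [eval_sub, eval_X, eval_C]
          rcases lt_or_ge x c with hxc | hcx
          · have hfac : ∀ j ∈ Finset.range K,
                ((x : ℝ) - ((c : ℝ) + (j : ℝ))) = (-1) * (((c : ℝ) + (j : ℝ)) - (x : ℝ)) :=
              fun j _ => by ring
            rw [Finset.prod_congr rfl hfac, Finset.prod_mul_distrib, Finset.prod_const,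
              Finset.card_range, hKeven.neg_one_pow, one_mul]
            refine Finset.prod_nonneg fun j _ => ?_
            have hxc' : (x : ℝ) < (c : ℝ) := by exact_mod_cast hxc
            have hj' : (0 : ℝ) ≤ (j : ℝ) := j.cast_nonneg
            linarith
          · rcases lt_or_ge x (c + K) with hxcK | hcKx
            · refine le_of_eq (Finset.prod_eq_zero
                (Finset.mem_range.2 (show x - c < K by omega)) ?_).symm
              have hxcr : (((x - c : ℕ)) : ℝ) = (x : ℝ) - (c : ℝ) := by
                rw [Nat.cast_sub hcx]
              rw [hxcr]; ring
            · refine Finset.prod_nonneg fun j hj => ?_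
              have hj' : (j : ℝ) ≤ (K : ℝ) - 1 := by
                have := Finset.mem_range.1 hj
                have : (j : ℝ) + 1 ≤ (K : ℝ) := by exact_mod_cast this
                linarith
              have hx' : (c : ℝ) + (K : ℝ) ≤ (x : ℝ) := by exact_mod_cast hcKx
              linarith
        have hTQnn : 0 ≤ (T * Q).eval (x : ℝ) := by
          rw [eval_mul]
          by_cases hxS : x ∈ S
          · have hQ0 : Q.eval (x : ℝ) = 0 := by
              rw [hSprod, eval_prod]
              exact Finset.prod_eq_zero hxS (by simp)
            rw [hQ0, mul_zero]
          · by_cases hxR : x ∈ R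
            · have hT0 : T.eval (x : ℝ) = 0 := by
                rw [hT, eval_prod]
                exact Finset.prod_eq_zero hxR (by simp)
              rw [hT0, zero_mul]
            · have hTx : 0 ≤ T.eval (x : ℝ) := by
                rw [hT, eval_prod]
                refine Finset.prod_nonneg fun y hy => ?_
                have hyx := hRinit x hxS hxR y hy
                simp only [eval_sub, eval_X, eval_C]
                have hyx' : (y : ℝ) < (x : ℝ) := by exact_mod_cast hyx
                linarith
              exact mul_nonneg hTx (hQnn x)
        exact mul_nonneg hBnn hTQnn
    exact h _ hPoly
  -- the polynomial in c
  set G : Polynomial ℝ := ∑ p ∈ Finset.range (K + 1),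
    C (Lf (X ^ p * (T * Q)) m) * ((Polynomial.hasseDeriv p E).comp (-X)) with hG
  have hGeval : ∀ c : ℕ, G.eval (c : ℝ)
      = Lf ((Polynomial.taylor (-(c : ℝ)) E : Polynomial ℝ) * (T * Q)) m := by
    intro c
    have hdegB : (Polynomial.taylor (-(c : ℝ)) E : Polynomial ℝ).natDegree < K + 1 := by
      rw [Polynomial.natDegree_taylor, hEdeg]; omega
    rw [SignAux.Lf_mul_expand m _ (T * Q) (K + 1) hdegB, hG, eval_finset_sum]
    refine Finset.sum_congr rfl fun p _ => ?_
    rw [eval_mul, eval_C, eval_comp, eval_neg, eval_X, Polynomial.taylor_coeff]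
    ring
  have hGpos : ∀ c : ℕ, c₀ ≤ c → 0 ≤ G.eval (c : ℝ) := fun c hc => by
    rw [hGeval c]; exact hpos c hc
  have hdegHD : ∀ p, ((Polynomial.hasseDeriv p E).comp (-X)).natDegree ≤ K - p := by
    intro p
    refine le_trans natDegree_comp_le ?_
    have h1 := Polynomial.natDegree_hasseDeriv_le E p
    rw [hEdeg] at h1
    have h2 : (-X : Polynomial ℝ).natDegree = 1 := by rw [natDegree_neg, natDegree_X]
    rw [h2, mul_one]
    exact h1
  have hGdeg : G.natDegree ≤ K - ε := by
    rw [hG]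
    refine natDegree_sum_le_of_forall_le _ _ fun p hp => ?_
    rcases lt_or_ge p ε with hpε | hεp
    · rw [hw0 p hpε, map_zero, zero_mul, natDegree_zero]
      omega
    · refine le_trans natDegree_mul_le ?_
      have h1 := hdegHD p
      have h2 : (C (Lf (X ^ p * (T * Q)) m)).natDegree = 0 := natDegree_C _
      have hpK : p < K + 1 := Finset.mem_range.1 hp
      omega
  have hEcoefK : E.coeff K = 1 := by
    rw [← hEdeg]; exact hEmon.coeff_natDegree
  have hsignKε : ((-1 : ℝ)) ^ (K - ε) = (-1 : ℝ) ^ ε := by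
    rcases (show ε = 0 ∨ ε = 1 by omega) with h0 | h1
    · rw [h0, Nat.sub_zero, hKeven.neg_one_pow, pow_zero]
    · rw [h1, pow_one]
      have hodd : Odd (K - 1) := by rw [Nat.odd_iff]; omega
      rw [hodd.neg_one_pow]
  have hGcoeff : G.coeff (K - ε) = (-1 : ℝ) ^ ε * (K.choose ε : ℝ) * Lf (X ^ p0 * Q) m := by
    rw [hG, finset_sum_coeff, Finset.sum_eq_single ε]
    · rw [coeff_C_mul, SignAux.coeff_comp_neg_X, Polynomial.hasseDeriv_coeff,
        (show K - ε + ε = K by omega), hEcoefK, hwε, hsignKε, mul_one]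
      ring
    · intro p hp hne
      rcases lt_or_ge p ε with hpε | hεp
      · rw [hw0 p hpε, map_zero, zero_mul, coeff_zero]
      · have hεp' : ε < p := lt_of_le_of_ne hεp (Ne.symm hne)
        have hpK : p < K + 1 := Finset.mem_range.1 hp
        rw [coeff_C_mul, coeff_eq_zero_of_natDegree_lt (by
          have := hdegHD p
          omega), mul_zero]
    · intro hεmem
      exact absurd (Finset.mem_range.2 (by omega)) hεmem
  have hfinal := SignAux.coeff_nonneg_of_eventually_nonneg G (K - ε) c₀ hGdeg hGpos
  rw [hGcoeff] at hfinal
  have hcho : (0 : ℝ) < (K.choose ε : ℝ) := by exact_mod_cast Nat.choose_pos hεK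
  have hsign2 : ((-1 : ℝ)) ^ p0 = (-1 : ℝ) ^ ε := by
    have hrε : p0 = r + ε := by omega
    rw [hrε, pow_add, Even.neg_one_pow (by rw [Nat.even_iff]; omega), one_mul]
  rw [hsign2]
  rcases (show ε = 0 ∨ ε = 1 by omega) with h0 | h1
  · rw [h0] at hfinal ⊢
    rw [Nat.choose_zero_right] at hfinal
    simp only [pow_zero, one_mul, Nat.cast_one] at hfinal ⊢
    linarith
  · rw [h1] at hfinal ⊢
    rw [Nat.choose_one_right] at hfinal
    simp only [pow_one] at hfinal ⊢
    have hKpos : (0 : ℝ) < (K : ℝ) := by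
      have : 0 < K := by omega
      exact_mod_cast this
    nlinarith
end

section
/- Let n ≥ 1 and m = (m_1,…,m_n) ∈ ℝ^n with m_0 := 1. For k ≥ 0 let H(k) be the (k+1)×(k+1) matrix with entries H(k)_{il} = 0 if i > l and H(k)_{il} = (−1)^{l−i}·binom(l,i) if i ≤ l (0 ≤ i,l ≤ k), and let A(k) = (m_{i+j})_{i,j=0}^k and B(k) = (m_{i+j+1})_{i,j=0}^k be the Hankel matrices of m. For j = 2k define D_j := (H(k)ᵀA(k) + A(k)H(k))/2, and for j = 2k+1 define D_j := (H(k)ᵀB(k) + B(k)H(k))/2. If D_j is positive definite for every j = 1,…,n, then m is realizable on ℕ₀, and in fact I-realizable. -/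
open Polynomial

/-- The matrix `H(k)` with `H(k)_{il} = (-1)^{l-i} binom(l,i)` for `i ≤ l`,
and `0` otherwise. -/
noncomputable def Hmat (k : ℕ) : Matrix (Fin (k + 1)) (Fin (k + 1)) ℝ :=
  Matrix.of fun i l =>
    if (i : ℕ) ≤ (l : ℕ) then
      (-1 : ℝ) ^ ((l : ℕ) - (i : ℕ)) * ((l : ℕ).choose (i : ℕ) : ℝ)
    else 0

/-- The Hankel matrix `A(k) = (m_{i+j})`. -/
noncomputable def Amat (m : ℕ → ℝ) (k : ℕ) : Matrix (Fin (k + 1)) (Fin (k + 1)) ℝ :=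
  Matrix.of fun i j => m ((i : ℕ) + (j : ℕ))

/-- The Hankel matrix `B(k) = (m_{i+j+1})`. -/
noncomputable def Bmat (m : ℕ → ℝ) (k : ℕ) : Matrix (Fin (k + 1)) (Fin (k + 1)) ℝ :=
  Matrix.of fun i j => m ((i : ℕ) + (j : ℕ) + 1)

namespace SuffAux

lemma Lf_zero (w : ℕ → ℝ) : Lf 0 w = 0 := by simp [Lf]

lemma Lf_add (P Q : Polynomial ℝ) (w : ℕ → ℝ) : Lf (P + Q) w = Lf P w + Lf Q w := by
  unfold Lf
  exact Polynomial.sum_add_index P Q _ (fun a => zero_mul _) (fun a b₁ b₂ => add_mul _ _ _)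

lemma Lf_monomial (t : ℕ) (a : ℝ) (w : ℕ → ℝ) : Lf (monomial t a) w = a * w t := by
  unfold Lf
  exact Polynomial.sum_monomial_index a _ (zero_mul _)

lemma Lf_C (a : ℝ) (w : ℕ → ℝ) : Lf (C a) w = a * w 0 := by
  rw [← monomial_zero_left]; exact Lf_monomial 0 a w

lemma Lf_Cmul (c : ℝ) (P : Polynomial ℝ) (w : ℕ → ℝ) : Lf (C c * P) w = c * Lf P w := by
  unfold Lf
  rw [← Polynomial.smul_eq_C_mul, Polynomial.sum_smul_index P c _ (fun i => zero_mul (w i))]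
  rw [Polynomial.sum_def, Polynomial.sum_def, Finset.mul_sum]
  exact Finset.sum_congr rfl (fun k _ => by ring)

lemma Lf_finsetSum {ι : Type*} (s : Finset ι) (f : ι → Polynomial ℝ) (w : ℕ → ℝ) :
    Lf (∑ i ∈ s, f i) w = ∑ i ∈ s, Lf (f i) w := by
  induction s using Finset.cons_induction with
  | empty => simp [Lf_zero]
  | cons i s hi ih => rw [Finset.sum_cons, Finset.sum_cons, Lf_add, ih]

lemma Lf_sub_fun (P : Polynomial ℝ) (w₁ w₂ : ℕ → ℝ) (δ : ℝ) :
    Lf P (fun t => w₁ t - δ * w₂ t) = Lf P w₁ - δ * Lf P w₂ := by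
  unfold Lf
  rw [Polynomial.sum_def, Polynomial.sum_def, Polynomial.sum_def, Finset.mul_sum,
    ← Finset.sum_sub_distrib]
  exact Finset.sum_congr rfl (fun k _ => by ring)

lemma Lf_neg (P : Polynomial ℝ) (w : ℕ → ℝ) : Lf (-P) w = -Lf P w := by
  have h := Lf_add P (-P) w
  simp only [add_neg_cancel, Lf_zero] at h
  linarith

lemma Lf_range (P : Polynomial ℝ) (w : ℕ → ℝ) (N : ℕ) (h : P.natDegree < N) :
    Lf P w = ∑ k ∈ Finset.range N, P.coeff k * w k := by
  unfold Lf
  exact Polynomial.sum_over_range' P (fun a => zero_mul (w a)) N h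

/-- The cone generated by `Q(x)Q(x-1)` and `x·Q(x)Q(x-1)` with degree budget `d`. -/
inductive InG : ℕ → Polynomial ℝ → Prop
  | sq (d : ℕ) (Q : Polynomial ℝ) (h : 2 * Q.natDegree ≤ d) : InG d (Q * Q.comp (X - 1))
  | xsq (d : ℕ) (Q : Polynomial ℝ) (h : 2 * Q.natDegree + 1 ≤ d) :
      InG d (X * (Q * Q.comp (X - 1)))
  | cmul (d : ℕ) (c : ℝ) (P : Polynomial ℝ) (hc : 0 ≤ c) (hP : InG d P) : InG d (C c * P)
  | add (d : ℕ) (P R : Polynomial ℝ) (hP : InG d P) (hR : InG d R) : InG d (P + R)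

lemma InG_one (d : ℕ) : InG d 1 := by
  have h := InG.sq d 1 (by simp)
  simpa using h

lemma InG_C (d : ℕ) {c : ℝ} (hc : 0 ≤ c) : InG d (C c) := by
  have h := InG.cmul d c 1 hc (InG_one d)
  simpa using h

lemma InG_X {d : ℕ} (hd : 1 ≤ d) : InG d X := by
  have h := InG.xsq d 1 (by simpa)
  simpa using h

lemma InG.mono {d d' : ℕ} {P : Polynomial ℝ} (h : InG d P) (hdd : d ≤ d') : InG d' P := by
  induction h with
  | sq Q h => exact InG.sq d' Q (le_trans h hdd)
  | xsq Q h => exact InG.xsq d' Q (le_trans h hdd)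
  | cmul c P hc hP ih => exact InG.cmul d' c P hc ih
  | add P R hP hR ihP ihR => exact InG.add d' P R ihP ihR

lemma sq_mul_sq (Q R : Polynomial ℝ) :
    (Q * Q.comp (X - 1)) * (R * R.comp (X - 1)) = (Q * R) * ((Q * R).comp (X - 1)) := by
  rw [mul_comp]; ring

lemma sq_mul_xsq (Q R : Polynomial ℝ) :
    (Q * Q.comp (X - 1)) * (X * (R * R.comp (X - 1)))
      = X * ((Q * R) * ((Q * R).comp (X - 1))) := by
  rw [mul_comp]; ring

lemma xsq_mul_xsq (Q R : Polynomial ℝ) :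
    (X * (Q * Q.comp (X - 1))) * (X * (R * R.comp (X - 1)))
      = (X * (Q * R)) * ((X * (Q * R)).comp (X - 1))
        + X * ((Q * R) * ((Q * R).comp (X - 1))) := by
  rw [mul_comp, mul_comp, X_comp]; ring

lemma InG.mul : ∀ {d₁ P}, InG d₁ P → ∀ {d₂ R}, InG d₂ R → InG (d₁ + d₂) (P * R) := by
  intro d₁ P h₁
  induction h₁ with
  | cmul c P hc hP ih =>
      intro d₂ R h₂
      rw [mul_assoc]
      exact InG.cmul _ c _ hc (ih h₂)
  | add P P' hP hP' ihP ihP' =>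
      intro d₂ R h₂
      rw [add_mul]
      exact InG.add _ _ _ (ihP h₂) (ihP' h₂)
  | sq Q hQ =>
      intro d₂ R h₂
      induction h₂ with
      | cmul c R hc hR ih =>
          rw [show (Q * Q.comp (X - 1)) * (C c * R) = C c * ((Q * Q.comp (X - 1)) * R) by ring]
          exact InG.cmul _ c _ hc ih
      | add R R' hR hR' ihR ihR' =>
          rw [mul_add]
          exact InG.add _ _ _ ihR ihR'
      | sq S hS =>
          rw [sq_mul_sq]
          refine InG.sq _ _ ?_
          have := Polynomial.natDegree_mul_le (p := Q) (q := S)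
          omega
      | xsq S hS =>
          rw [sq_mul_xsq]
          refine InG.xsq _ _ ?_
          have := Polynomial.natDegree_mul_le (p := Q) (q := S)
          omega
  | xsq Q hQ =>
      intro d₂ R h₂
      induction h₂ with
      | cmul c R hc hR ih =>
          rw [show (X * (Q * Q.comp (X - 1))) * (C c * R)
            = C c * ((X * (Q * Q.comp (X - 1))) * R) by ring]
          exact InG.cmul _ c _ hc ih
      | add R R' hR hR' ihR ihR' =>
          rw [mul_add]
          exact InG.add _ _ _ ihR ihR'
      | sq S hS =>
          rw [show (X * (Q * Q.comp (X - 1))) * (S * S.comp (X - 1))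
            = (S * S.comp (X - 1)) * (X * (Q * Q.comp (X - 1))) by ring, sq_mul_xsq]
          refine InG.xsq _ _ ?_
          have := Polynomial.natDegree_mul_le (p := S) (q := Q)
          have : (S * Q).natDegree ≤ S.natDegree + Q.natDegree := this
          have hc : (Q * S).natDegree ≤ Q.natDegree + S.natDegree :=
            Polynomial.natDegree_mul_le
          omega
      | xsq S hS =>
          rw [xsq_mul_xsq]
          have hQS : (Q * S).natDegree ≤ Q.natDegree + S.natDegree :=
            Polynomial.natDegree_mul_le
          have hXQS : (X * (Q * S)).natDegree ≤ 1 + (Q * S).natDegree := by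
            have := Polynomial.natDegree_mul_le (p := (X : Polynomial ℝ)) (q := Q * S)
            simpa using this
          refine InG.add _ _ _ (InG.sq _ _ (by omega)) (InG.xsq _ _ (by omega))


lemma comp_X_sub_one (s : ℝ) : (X - C s).comp (X - 1 : Polynomial ℝ) = X - C (s + 1) := by
  simp only [sub_comp, C_comp, X_comp, C_add, C_1]
  ring

lemma quad_expand (u v : ℝ) :
    (X - C u) * (X - C v) = X ^ 2 - C (u + v) * X + C (u * v) := by
  simp only [C_add, C_mul]
  ring

lemma quad_rep' (u v s ν : ℝ) (h1 : u = 2 * s + 1) (h2 : v = s * (s + 1) + ν) :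
    (X ^ 2 - C u * X + C v : Polynomial ℝ)
      = (X - C s) * ((X - C s).comp (X - 1)) + C ν := by
  rw [comp_X_sub_one, quad_expand, h1, h2]
  simp only [C_add, C_mul, C_1, map_ofNat]
  ring

lemma quad_rep (r r' s ν : ℝ) (h1 : r + r' = 2 * s + 1) (h2 : r * r' = s * (s + 1) + ν) :
    (X - C r) * (X - C r') = (X - C s) * ((X - C s).comp (X - 1)) + C ν := by
  rw [quad_expand]
  exact quad_rep' _ _ s ν h1 h2

lemma InG_quad (s ν : ℝ) (hν : 0 ≤ ν) {d : ℕ} (hd : 2 ≤ d) :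
    InG d ((X - C s) * ((X - C s).comp (X - 1)) + C ν) := by
  refine InG.add _ _ _ (InG.sq _ _ ?_) (InG_C _ hν)
  rw [natDegree_X_sub_C]
  omega

lemma quad_monic (s ν : ℝ) :
    ((X - C s) * ((X - C s).comp (X - 1)) + C ν).Monic := by
  rw [comp_X_sub_one]
  refine Polynomial.Monic.add_of_left ((monic_X_sub_C s).mul (monic_X_sub_C (s + 1))) ?_
  rw [degree_mul, degree_X_sub_C, degree_X_sub_C]
  exact lt_of_le_of_lt degree_C_le (by norm_num)

lemma quad_natDegree (s ν : ℝ) :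
    ((X - C s) * ((X - C s).comp (X - 1)) + C ν).natDegree = 2 := by
  rw [comp_X_sub_one]
  have h1 : ((X - C s) * (X - C (s + 1))).natDegree = 2 := by
    rw [natDegree_mul (X_sub_C_ne_zero s) (X_sub_C_ne_zero (s + 1)),
      natDegree_X_sub_C, natDegree_X_sub_C]
  rw [natDegree_add_C, h1]

lemma eval_pos_of_factor {q P₂ : Polynomial ℝ} (x : ℝ)
    (hq : 0 < q.eval x) (hP : 0 < (q * P₂).eval x) : 0 < P₂.eval x := by
  rw [eval_mul] at hP
  nlinarith

theorem pos_InG : ∀ (e : ℕ) (P : Polynomial ℝ), P.natDegree ≤ e → ∀ d, P.natDegree ≤ d →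
    (∀ x : ℕ, 0 < P.eval (x : ℝ)) → InG d P := by
  intro e
  induction e using Nat.strong_induction_on with
  | _ e IH =>
  intro P hPe d hPd hpos
  rcases Nat.eq_zero_or_pos P.natDegree with h0 | hdeg
  · obtain ⟨c, rfl⟩ := Polynomial.natDegree_eq_zero.mp h0
    have hc : 0 < c := by simpa using hpos 0
    exact InG_C d hc.le
  · have hP0 : P ≠ 0 := fun h => by simpa [h] using hpos 0
    have hmapdeg : (P.map (algebraMap ℝ ℂ)).degree = P.degree :=
      Polynomial.degree_map_eq_of_injective (algebraMap ℝ ℂ).injective P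
    have hdegpos : 0 < (P.map (algebraMap ℝ ℂ)).degree := by
      rw [hmapdeg]; exact natDegree_pos_iff_degree_pos.mp hdeg
    obtain ⟨z, hz⟩ := Complex.exists_root hdegpos
    have hevalz : Polynomial.eval₂ (algebraMap ℝ ℂ) z P = 0 := by
      rwa [Polynomial.IsRoot, Polynomial.eval_map] at hz
    by_cases him : z.im = 0
    · -- real root r
      set r := z.re with hr
      have hroot : P.IsRoot r := by
        have hz' : z = (r : ℂ) := Complex.ext rfl (by simpa using him)
        rw [hz'] at hevalz
        have h2 : Polynomial.eval₂ (algebraMap ℝ ℂ) (algebraMap ℝ ℂ r) P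
            = algebraMap ℝ ℂ (P.eval r) := Polynomial.eval₂_at_apply _ r
        have h3 : (algebraMap ℝ ℂ) r = (r : ℂ) := rfl
        rw [h3] at h2
        rw [h2] at hevalz
        have h5 : ((P.eval r : ℝ) : ℂ) = 0 := hevalz
        rw [Polynomial.IsRoot]
        exact_mod_cast h5
      set P₁ := P /ₘ (X - C r) with hP₁def
      have hfac : (X - C r) * P₁ = P := mul_divByMonic_eq_iff_isRoot.mpr hroot
      have hP₁0 : P₁ ≠ 0 := by
        intro h; rw [h, mul_zero] at hfac; exact hP0 hfac.symm
      have hdeg₁ : P₁.natDegree = P.natDegree - 1 := by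
        rw [hP₁def, natDegree_divByMonic _ (monic_X_sub_C r), natDegree_X_sub_C]
      rcases lt_or_ge r 0 with hrneg | hrpos
      · -- negative real root
        have hpos₁ : ∀ x : ℕ, 0 < P₁.eval (x : ℝ) := by
          intro x
          have h2 : 0 < ((X - C r) * P₁).eval (x : ℝ) := by rw [hfac]; exact hpos x
          refine eval_pos_of_factor _ ?_ h2
          have : (0:ℝ) ≤ (x:ℝ) := Nat.cast_nonneg x
          simp only [eval_sub, eval_X, eval_C]
          linarith
        have hIG₁ : InG (d - 1) P₁ :=
          IH (e - 1) (by omega) P₁ (by omega) (d - 1) (by omega) hpos₁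
        have hIGlin : InG 1 (X - C r) := by
          rw [sub_eq_add_neg, ← C_neg]
          exact InG.add _ _ _ (InG_X le_rfl) (InG_C 1 (by linarith))
        have hmul := hIGlin.mul hIG₁
        rw [hfac] at hmul
        have h1d : 1 + (d - 1) = d := by omega
        rwa [h1d] at hmul
      · -- nonnegative real root, not a natural number
        set k := ⌊r⌋₊ with hk
        have hkle : (k : ℝ) ≤ r := Nat.floor_le hrpos
        have hklt : r < (k : ℝ) + 1 := Nat.lt_floor_add_one r
        have hkne : (k : ℝ) ≠ r := by
          intro h
          have h2 := hpos k
          rw [h] at h2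
          rw [Polynomial.IsRoot] at hroot
          linarith
        have hklt' : (k : ℝ) < r := lt_of_le_of_ne hkle hkne
        have hevk : P.eval (k : ℝ) = ((k : ℝ) - r) * P₁.eval (k : ℝ) := by
          rw [← hfac]; simp [eval_mul]
        have hevk1 : P.eval ((k : ℝ) + 1) = ((k : ℝ) + 1 - r) * P₁.eval ((k : ℝ) + 1) := by
          rw [← hfac]; simp [eval_mul]
        have h₁k : P₁.eval (k : ℝ) < 0 := by nlinarith [hpos k, hevk]
        have h₁k1 : 0 < P₁.eval ((k : ℝ) + 1) := by
          have hcast : ((k + 1 : ℕ) : ℝ) = (k : ℝ) + 1 := by push_cast; ring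
          have := hpos (k + 1)
          rw [hcast] at this
          nlinarith [this, hevk1]
        have hcont : ContinuousOn (fun t => P₁.eval t) (Set.Icc (k : ℝ) ((k : ℝ) + 1)) :=
          (Polynomial.continuous P₁).continuousOn
        have h0mem : (0 : ℝ) ∈ Set.Ioo (P₁.eval (k : ℝ)) (P₁.eval ((k : ℝ) + 1)) :=
          ⟨h₁k, h₁k1⟩
        obtain ⟨r', hr'mem, hr'root⟩ :=
          intermediate_value_Ioo (by linarith : (k : ℝ) ≤ (k : ℝ) + 1) hcont h0mem
        have hr'root' : P₁.IsRoot r' := hr'root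
        set P₂ := P₁ /ₘ (X - C r') with hP₂def
        have hfac₂ : (X - C r') * P₂ = P₁ := mul_divByMonic_eq_iff_isRoot.mpr hr'root'
        set s := (r + r' - 1) / 2 with hs
        set ν := r * r' - s * (s + 1) with hν
        have hq := quad_rep r r' s ν (by rw [hs]; ring) (by rw [hν]; ring)
        have hνpos : 0 ≤ ν := by
          have h1 := hr'mem.1
          have h2 := hr'mem.2
          rw [hν, hs]
          nlinarith
        have hfacP : P = ((X - C r) * (X - C r')) * P₂ := by
          rw [mul_assoc, hfac₂, hfac]
        have hqpos : ∀ x : ℕ, 0 < ((X - C r) * (X - C r')).eval (x : ℝ) := by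
          intro x
          simp only [eval_mul, eval_sub, eval_X, eval_C]
          rcases le_or_gt x k with hx | hx
          · have hx' : (x : ℝ) ≤ (k : ℝ) := by exact_mod_cast hx
            have := hr'mem.1
            exact mul_pos_of_neg_of_neg (by linarith) (by linarith)
          · have hx' : (k : ℝ) + 1 ≤ (x : ℝ) := by exact_mod_cast hx
            have := hr'mem.2
            exact mul_pos (by linarith) (by linarith)
        have hpos₂ : ∀ x : ℕ, 0 < P₂.eval (x : ℝ) := by
          intro x
          refine eval_pos_of_factor _ (hqpos x) ?_
          rw [← hfacP]; exact hpos x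
        have hP₂0 : P₂ ≠ 0 := by
          intro h; rw [h, mul_zero] at hfacP; exact hP0 hfacP
        have hdegq : ((X - C r) * (X - C r')).natDegree = 2 := by
          rw [natDegree_mul (X_sub_C_ne_zero r) (X_sub_C_ne_zero r'),
            natDegree_X_sub_C, natDegree_X_sub_C]
        have hdegP : P.natDegree = 2 + P₂.natDegree := by
          rw [hfacP, natDegree_mul (mul_ne_zero (X_sub_C_ne_zero r) (X_sub_C_ne_zero r')) hP₂0,
            hdegq]
        have hIG₂ : InG (d - 2) P₂ :=
          IH (e - 2) (by omega) P₂ (by omega) (d - 2) (by omega) hpos₂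
        have hIGq : InG 2 ((X - C r) * (X - C r')) := by
          rw [hq]; exact InG_quad s ν hνpos le_rfl
        have hmul := hIGq.mul hIG₂
        rw [← hfacP] at hmul
        have h2d : 2 + (d - 2) = d := by omega
        rwa [h2d] at hmul
    · -- complex conjugate pair
      set a := z.re with ha
      set b := z.im with hb
      set s := (2 * a - 1) / 2 with hs
      set ν := (a ^ 2 + b ^ 2) - s * (s + 1) with hν
      set q := (X - C s) * ((X - C s).comp (X - 1)) + C ν with hqdef
      have hq2 : q = X ^ 2 - C (2 * a) * X + C (a ^ 2 + b ^ 2) := by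
        rw [hqdef]
        exact (quad_rep' (2 * a) (a ^ 2 + b ^ 2) s ν (by rw [hs]; ring) (by rw [hν]; ring)).symm
      have hνpos : 0 ≤ ν := by
        have : ν = b ^ 2 + 1 / 4 := by rw [hν, hs]; ring
        rw [this]; positivity
      have hmonic : q.Monic := by rw [hqdef]; exact quad_monic s ν
      have hqdeg : q.natDegree = 2 := by rw [hqdef]; exact quad_natDegree s ν
      have hkey : P %ₘ q = 0 := by
        have hdecomp : P %ₘ q + q * (P /ₘ q) = P := modByMonic_add_div P q
        have hqz : Polynomial.eval₂ (algebraMap ℝ ℂ) z q = 0 := by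
          rw [hq2]
          simp only [eval₂_add, eval₂_sub, eval₂_mul, eval₂_pow, eval₂_X, eval₂_C]
          have hmap : ∀ u : ℝ, (algebraMap ℝ ℂ) u = (u : ℂ) := fun u => rfl
          rw [hmap, hmap]
          apply Complex.ext
          · simp [pow_two, Complex.mul_re, Complex.mul_im, ← ha, ← hb]
            ring
          · simp [pow_two, Complex.mul_re, Complex.mul_im, ← ha, ← hb]
            ring
        have hRz : Polynomial.eval₂ (algebraMap ℝ ℂ) z (P %ₘ q) = 0 := by
          have hcong := congrArg (Polynomial.eval₂ (algebraMap ℝ ℂ) z) hdecomp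
          rw [eval₂_add, eval₂_mul, hqz, zero_mul, add_zero, hevalz] at hcong
          exact hcong
        have hRnd : (P %ₘ q).natDegree ≤ 1 := by
          rcases eq_or_ne (P %ₘ q) 0 with h | h
          · simp [h]
          · have hlt : (P %ₘ q).degree < q.degree := degree_modByMonic_lt P hmonic
            have hqd : q.degree = (2 : ℕ) := by
              rw [Polynomial.degree_eq_natDegree hmonic.ne_zero, hqdeg]
            rw [hqd, Polynomial.degree_eq_natDegree h] at hlt
            exact_mod_cast Nat.lt_succ_iff.mp (by exact_mod_cast hlt)
        have hRform := Polynomial.eq_X_add_C_of_natDegree_le_one hRnd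
        rw [hRform] at hRz
        simp only [eval₂_add, eval₂_mul, eval₂_C, eval₂_X] at hRz
        have hmap : ∀ u : ℝ, (algebraMap ℝ ℂ) u = (u : ℂ) := fun u => rfl
        rw [hmap, hmap] at hRz
        have him2 := congrArg Complex.im hRz
        simp at him2
        have hc₁ : (P %ₘ q).coeff 1 = 0 := by
          rcases him2 with h | h
          · exact h
          · exact absurd h him
        have hre2 := congrArg Complex.re hRz
        rw [hc₁] at hre2
        simp at hre2
        rw [hRform, hc₁, hre2]
        simp
      have hfac : P = q * (P /ₘ q) := by
        conv_lhs => rw [← modByMonic_add_div P q]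
        rw [hkey, zero_add]
      set P₂ := P /ₘ q with hP₂def
      have hqposall : ∀ t : ℝ, 0 < q.eval t := by
        intro t
        rw [hq2]
        simp only [eval_add, eval_sub, eval_mul, eval_pow, eval_X, eval_C]
        have hb2 : 0 < b ^ 2 := lt_of_le_of_ne (sq_nonneg b) (Ne.symm (pow_ne_zero 2 him))
        nlinarith [sq_nonneg (t - a)]
      have hpos₂ : ∀ x : ℕ, 0 < P₂.eval (x : ℝ) := by
        intro x
        refine eval_pos_of_factor _ (hqposall x) ?_
        rw [← hfac]; exact hpos x
      have hP₂0 : P₂ ≠ 0 := by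
        intro h; rw [h, mul_zero] at hfac; exact hP0 hfac
      have hdegP : P.natDegree = 2 + P₂.natDegree := by
        rw [hfac, natDegree_mul hmonic.ne_zero hP₂0, hqdeg]
      have hIG₂ : InG (d - 2) P₂ :=
        IH (e - 2) (by omega) P₂ (by omega) (d - 2) (by omega) hpos₂
      have hIGq : InG 2 q := by rw [hqdef]; exact InG_quad s ν hνpos le_rfl
      have hmul := hIGq.mul hIG₂
      rw [← hfac] at hmul
      have h2d : 2 + (d - 2) = d := by omega
      rwa [h2d] at hmul


/-- entries of `Hmat` as a function on `ℕ`. -/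
noncomputable def hc (j l : ℕ) : ℝ :=
  if j ≤ l then (-1 : ℝ) ^ (l - j) * (l.choose j : ℝ) else 0

lemma Hmat_apply (k : ℕ) (i l : Fin (k + 1)) : Hmat k i l = hc (i : ℕ) (l : ℕ) := rfl

/-- coefficient of `Q.comp (X-1)`. -/
lemma coeff_comp_sub_one (Q : Polynomial ℝ) (k : ℕ) (hQ : Q.natDegree ≤ k) (j : ℕ) :
    (Q.comp (X - 1)).coeff j = ∑ l ∈ Finset.range (k + 1), hc j l * Q.coeff l := by
  have h1 : (X - 1 : Polynomial ℝ) = X + C (-1) := by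
    rw [C_neg, C_1]; ring
  have h2 : Q.comp (X - 1) = Polynomial.taylor (-1) Q := by
    rw [h1, Polynomial.taylor_apply]
  rw [h2, Polynomial.taylor_coeff]
  have hd1 := Polynomial.natDegree_hasseDeriv_le Q j
  have hd : ((Polynomial.hasseDeriv j) Q).natDegree < k + 1 := by omega
  rw [Polynomial.eval_eq_sum_range' hd]
  simp only [Polynomial.hasseDeriv_coeff]
  -- LHS: ∑ t in range (k+1), (t+j).choose j * Q.coeff (t+j) * (-1)^t
  -- RHS: ∑ l in range (k+1), hc j l * Q.coeff l
  have hR1 : ∑ l ∈ Finset.range (k + 1), hc j l * Q.coeff l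
      = ∑ l ∈ Finset.range (k + 1 + j), hc j l * Q.coeff l := by
    refine Finset.sum_subset (Finset.range_subset_range.mpr (by omega)) ?_
    intro l hl hl'
    have : k < l := by
      simp only [Finset.mem_range] at hl hl'; omega
    have : Q.coeff l = 0 := Polynomial.coeff_eq_zero_of_natDegree_lt (by omega)
    rw [this, mul_zero]
  have hR2 : ∑ l ∈ Finset.range (k + 1 + j), hc j l * Q.coeff l
      = ∑ l ∈ Finset.Ico j (k + 1 + j), hc j l * Q.coeff l := by
    refine (Finset.sum_subset ?_ ?_).symm
    · intro l hl
      simp only [Finset.mem_Ico] at hl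
      simp only [Finset.mem_range]
      omega
    · intro l hl hl'
      simp only [Finset.mem_range] at hl
      simp only [Finset.mem_Ico] at hl'
      have : l < j := by omega
      have : hc j l = 0 := by rw [hc, if_neg (by omega)]
      rw [this, zero_mul]
  rw [hR1, hR2, Finset.sum_Ico_eq_sum_range]
  have : k + 1 + j - j = k + 1 := by omega
  rw [this]
  refine Finset.sum_congr rfl ?_
  intro t _
  rw [hc, if_pos (by omega)]
  have h3 : j + t - j = t := by omega
  have h4 : (j + t).choose j = (t + j).choose j := by rw [Nat.add_comm]
  rw [h3, h4]
  have h5 : Q.coeff (j + t) = Q.coeff (t + j) := by rw [Nat.add_comm]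
  rw [h5]
  ring

lemma Lf_mul_expand (P R : Polynomial ℝ) (k : ℕ) (hP : P.natDegree ≤ k)
    (hR : R.natDegree ≤ k) (w : ℕ → ℝ) :
    Lf (P * R) w = ∑ i ∈ Finset.range (k + 1), ∑ j ∈ Finset.range (k + 1),
      P.coeff i * R.coeff j * w (i + j) := by
  conv_lhs => rw [P.as_sum_range' (k + 1) (by omega), R.as_sum_range' (k + 1) (by omega)]
  rw [Finset.sum_mul_sum, Lf_finsetSum]
  refine Finset.sum_congr rfl ?_
  intro i _
  rw [Lf_finsetSum]
  refine Finset.sum_congr rfl ?_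
  intro j _
  rw [monomial_mul_monomial, Lf_monomial]

lemma Lf_X_mul (S : Polynomial ℝ) (w : ℕ → ℝ) : Lf (X * S) w = Lf S (fun t => w (t + 1)) := by
  rcases eq_or_ne S 0 with h | h
  · simp [h, Lf_zero]
  · have hX : X * S = S * X := mul_comm _ _
    set N := S.natDegree + 1 with hN
    have hdeg : (S * X).natDegree < N + 1 := by
      have := Polynomial.natDegree_mul_le (p := S) (q := (X : Polynomial ℝ))
      have hx : (X : Polynomial ℝ).natDegree = 1 := natDegree_X
      omega
    rw [hX, Lf_range _ _ (N + 1) hdeg, Finset.sum_range_succ']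
    have h0 : (S * X).coeff 0 = 0 := by
      rw [Polynomial.mul_coeff_zero]
      simp
    rw [h0, zero_mul, add_zero]
    rw [Lf_range S _ N (by omega)]
    refine Finset.sum_congr rfl ?_
    intro t _
    rw [Polynomial.coeff_mul_X]

/-- symmetric Hankel-type matrix of a kernel `g`. -/
lemma form_matrix (k : ℕ) (x : Fin (k + 1) → ℝ) (g : ℕ → ℕ → ℝ)
    (hsym : ∀ i j : ℕ, g i j = g j i) :
    dotProduct x
      ((((1 : ℝ) / 2) • ((Hmat k).transpose * (Matrix.of fun i j : Fin (k + 1) => g i j)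
          + (Matrix.of fun i j : Fin (k + 1) => g i j) * Hmat k)).mulVec x)
      = ∑ i : Fin (k + 1), ∑ j : Fin (k + 1),
          x i * ((Hmat k).mulVec x j) * g (i : ℕ) (j : ℕ) := by
  classical
  set G : Matrix (Fin (k + 1)) (Fin (k + 1)) ℝ := Matrix.of fun i j => g i j with hG
  have hGsym : G.transpose = G := by
    apply Matrix.ext
    intro i j
    simp only [Matrix.transpose_apply, hG, Matrix.of_apply]
    exact hsym j i
  set y := (Hmat k).mulVec x with hy
  have t1 : dotProduct x (((Hmat k).transpose * G).mulVec x)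
      = dotProduct y (G.mulVec x) := by
    rw [← Matrix.mulVec_mulVec, Matrix.dotProduct_mulVec x, Matrix.vecMul_transpose]
  have t2 : dotProduct x ((G * Hmat k).mulVec x)
      = dotProduct y (G.mulVec x) := by
    have hvm : Matrix.vecMul x G = G.mulVec x := by
      conv_lhs => rw [← hGsym]
      rw [Matrix.vecMul_transpose]
    rw [← Matrix.mulVec_mulVec, ← hy, Matrix.dotProduct_mulVec x, hvm]
    exact dotProduct_comm _ _
  rw [Matrix.smul_mulVec, dotProduct_smul, Matrix.add_mulVec,
    dotProduct_add, t1, t2]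
  have : dotProduct y (G.mulVec x)
      = ∑ i : Fin (k + 1), ∑ j : Fin (k + 1), x i * y j * g (i : ℕ) (j : ℕ) := by
    unfold dotProduct Matrix.mulVec dotProduct
    rw [Finset.sum_comm]
    refine Finset.sum_congr rfl ?_
    intro i _
    rw [Finset.mul_sum]
    refine Finset.sum_congr rfl ?_
    intro j _
    simp only [hG, Matrix.of_apply]
    rw [hsym (j : ℕ) (i : ℕ)]
    ring
  rw [this]
  rw [smul_eq_mul]
  ring

/-- main identity, even case. -/
lemma form_even (w : ℕ → ℝ) (k : ℕ) (Q : Polynomial ℝ) (hQ : Q.natDegree ≤ k) :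
    dotProduct (fun i : Fin (k + 1) => Q.coeff i)
      ((((1 : ℝ) / 2) • ((Hmat k).transpose * Amat w k + Amat w k * Hmat k)).mulVec
        (fun i : Fin (k + 1) => Q.coeff i))
      = Lf (Q * Q.comp (X - 1)) w := by
  have hA : Amat w k = Matrix.of fun i j : Fin (k + 1) => w ((i : ℕ) + (j : ℕ)) := rfl
  rw [hA, form_matrix k _ (fun i j => w (i + j)) (fun i j => by simp [Nat.add_comm i j])]
  have hcomp : (Q.comp (X - 1)).natDegree ≤ k := by
    have := Polynomial.natDegree_comp (p := Q) (q := (X - 1 : Polynomial ℝ))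
    rw [this]
    have h1 : (X - 1 : Polynomial ℝ).natDegree = 1 := by
      have : (X - 1 : Polynomial ℝ) = X - C 1 := by rw [C_1]
      rw [this, natDegree_X_sub_C]
    rw [h1, mul_one]
    exact hQ
  rw [Lf_mul_expand Q (Q.comp (X - 1)) k hQ hcomp w]
  rw [← Fin.sum_univ_eq_sum_range (fun i => ∑ j ∈ Finset.range (k + 1),
    Q.coeff i * (Q.comp (X - 1)).coeff j * w (i + j)) (k + 1)]
  refine Finset.sum_congr rfl ?_
  intro i _
  rw [← Fin.sum_univ_eq_sum_range (fun j =>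
    Q.coeff (i : ℕ) * (Q.comp (X - 1)).coeff j * w ((i : ℕ) + j)) (k + 1)]
  refine Finset.sum_congr rfl ?_
  intro j _
  have hyj : (Hmat k).mulVec (fun i : Fin (k + 1) => Q.coeff i) j
      = (Q.comp (X - 1)).coeff (j : ℕ) := by
    rw [coeff_comp_sub_one Q k hQ,
      ← Fin.sum_univ_eq_sum_range (fun l => hc (j : ℕ) l * Q.coeff l) (k + 1)]
    try rfl
  rw [hyj]
  try ring

/-- main identity, odd case. -/
lemma form_odd (w : ℕ → ℝ) (k : ℕ) (Q : Polynomial ℝ) (hQ : Q.natDegree ≤ k) :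
    dotProduct (fun i : Fin (k + 1) => Q.coeff i)
      ((((1 : ℝ) / 2) • ((Hmat k).transpose * Bmat w k + Bmat w k * Hmat k)).mulVec
        (fun i : Fin (k + 1) => Q.coeff i))
      = Lf (X * (Q * Q.comp (X - 1))) w := by
  have hB : Bmat w k = Matrix.of fun i j : Fin (k + 1) => w ((i : ℕ) + (j : ℕ) + 1) := rfl
  rw [hB, form_matrix k _ (fun i j => w (i + j + 1)) (fun i j => by simp [Nat.add_comm i j])]
  have hcomp : (Q.comp (X - 1)).natDegree ≤ k := by
    have := Polynomial.natDegree_comp (p := Q) (q := (X - 1 : Polynomial ℝ))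
    rw [this]
    have h1 : (X - 1 : Polynomial ℝ).natDegree = 1 := by
      have : (X - 1 : Polynomial ℝ) = X - C 1 := by rw [C_1]
      rw [this, natDegree_X_sub_C]
    rw [h1, mul_one]
    exact hQ
  rw [Lf_X_mul, Lf_mul_expand Q (Q.comp (X - 1)) k hQ hcomp]
  rw [← Fin.sum_univ_eq_sum_range (fun i => ∑ j ∈ Finset.range (k + 1),
    Q.coeff i * (Q.comp (X - 1)).coeff j * w (i + j + 1)) (k + 1)]
  refine Finset.sum_congr rfl ?_
  intro i _
  rw [← Fin.sum_univ_eq_sum_range (fun j =>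
    Q.coeff (i : ℕ) * (Q.comp (X - 1)).coeff j * w ((i : ℕ) + j + 1)) (k + 1)]
  refine Finset.sum_congr rfl ?_
  intro j _
  have hyj : (Hmat k).mulVec (fun i : Fin (k + 1) => Q.coeff i) j
      = (Q.comp (X - 1)).coeff (j : ℕ) := by
    rw [coeff_comp_sub_one Q k hQ,
      ← Fin.sum_univ_eq_sum_range (fun l => hc (j : ℕ) l * Q.coeff l) (k + 1)]
    try rfl
  rw [hyj]
  try ring

/-- hypothesis interface on a weight function. -/
def hypL (n : ℕ) (w : ℕ → ℝ) : Prop :=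
  (∀ Q : Polynomial ℝ, 2 * Q.natDegree ≤ n → 0 ≤ Lf (Q * Q.comp (X - 1)) w) ∧
  (∀ Q : Polynomial ℝ, 2 * Q.natDegree + 1 ≤ n → 0 ≤ Lf (X * (Q * Q.comp (X - 1))) w)

lemma InG_Lf_nonneg {n : ℕ} {P : Polynomial ℝ} (h : InG n P) {w : ℕ → ℝ} (hw : hypL n w) :
    0 ≤ Lf P w := by
  induction h with
  | sq Q hq => exact hw.1 Q hq
  | xsq Q hq => exact hw.2 Q hq
  | cmul c P hc hP ih => rw [Lf_Cmul]; exact mul_nonneg hc ih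
  | add P R hP hR ihP ihR => rw [Lf_add]; exact add_nonneg ihP ihR


lemma form_homog {r : ℕ} (M : Matrix (Fin (r + 1)) (Fin (r + 1)) ℝ) (a : ℝ)
    (u : Fin (r + 1) → ℝ) :
    dotProduct (a • u) (M.mulVec (a • u))
      = a ^ 2 * dotProduct u (M.mulVec u) := by
  rw [Matrix.mulVec_smul, dotProduct_smul, smul_dotProduct]
  simp [smul_eq_mul]
  ring

lemma form_continuous {r : ℕ} (M : Matrix (Fin (r + 1)) (Fin (r + 1)) ℝ) :
    Continuous (fun x : Fin (r + 1) → ℝ => dotProduct x (M.mulVec x)) := by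
  unfold dotProduct Matrix.mulVec
  apply continuous_finset_sum
  intro i _
  apply Continuous.mul (continuous_apply i)
  apply continuous_finset_sum
  intro j _
  exact Continuous.mul continuous_const (continuous_apply j)

lemma quad_lower {r : ℕ} (M : Matrix (Fin (r + 1)) (Fin (r + 1)) ℝ) (hM : M.PosDef) :
    ∃ c > 0, ∀ x : Fin (r + 1) → ℝ,
      c * ‖x‖ ^ 2 ≤ dotProduct x (M.mulVec x) := by
  have hne : (Metric.sphere (0 : Fin (r + 1) → ℝ) 1).Nonempty :=
    NormedSpace.sphere_nonempty.mpr zero_le_one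
  obtain ⟨x₀, hx₀mem, hmin⟩ := (isCompact_sphere (0 : Fin (r + 1) → ℝ) 1).exists_isMinOn hne
    (form_continuous M).continuousOn
  have hx₀norm : ‖x₀‖ = 1 := mem_sphere_zero_iff_norm.mp hx₀mem
  have hx₀ne : x₀ ≠ 0 := by
    intro h; rw [h, norm_zero] at hx₀norm; norm_num at hx₀norm
  have hc : 0 < dotProduct x₀ (M.mulVec x₀) := by
    have := hM.dotProduct_mulVec_pos hx₀ne
    rwa [star_trivial] at this
  refine ⟨dotProduct x₀ (M.mulVec x₀), hc, ?_⟩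
  intro x
  rcases eq_or_ne x 0 with h | h
  · simp [h, dotProduct_zero]
  · have hxn : 0 < ‖x‖ := norm_pos_iff.mpr h
    set u := ‖x‖⁻¹ • x with hu
    have hun : ‖u‖ = 1 := by
      rw [hu, norm_smul, norm_inv, norm_norm, inv_mul_cancel₀ (ne_of_gt hxn)]
    have hxu : x = ‖x‖ • u := by
      rw [hu, smul_smul, mul_inv_cancel₀ (ne_of_gt hxn), one_smul]
    have humem : u ∈ Metric.sphere (0 : Fin (r + 1) → ℝ) 1 :=
      mem_sphere_zero_iff_norm.mpr hun
    have hmin' : dotProduct x₀ (M.mulVec x₀) ≤ dotProduct u (M.mulVec u) :=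
      hmin humem
    have hfx := form_homog M ‖x‖ u
    rw [← hxu] at hfx
    nlinarith [sq_nonneg ‖x‖]

lemma quad_upper {r : ℕ} (M : Matrix (Fin (r + 1)) (Fin (r + 1)) ℝ) :
    ∃ C > 0, ∀ x : Fin (r + 1) → ℝ,
      |dotProduct x (M.mulVec x)| ≤ C * ‖x‖ ^ 2 := by
  have hne : (Metric.sphere (0 : Fin (r + 1) → ℝ) 1).Nonempty :=
    NormedSpace.sphere_nonempty.mpr zero_le_one
  obtain ⟨x₀, hx₀mem, hmax⟩ := (isCompact_sphere (0 : Fin (r + 1) → ℝ) 1).exists_isMaxOn hne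
    ((form_continuous M).abs).continuousOn
  set C₀ := |dotProduct x₀ (M.mulVec x₀)| with hC₀
  have hC₀0 : 0 ≤ C₀ := abs_nonneg _
  refine ⟨C₀ + 1, by linarith, ?_⟩
  intro x
  rcases eq_or_ne x 0 with h | h
  · simp [h, dotProduct_zero]
  · have hxn : 0 < ‖x‖ := norm_pos_iff.mpr h
    set u := ‖x‖⁻¹ • x with hu
    have hun : ‖u‖ = 1 := by
      rw [hu, norm_smul, norm_inv, norm_norm, inv_mul_cancel₀ (ne_of_gt hxn)]
    have hxu : x = ‖x‖ • u := by
      rw [hu, smul_smul, mul_inv_cancel₀ (ne_of_gt hxn), one_smul]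
    have humem : u ∈ Metric.sphere (0 : Fin (r + 1) → ℝ) 1 :=
      mem_sphere_zero_iff_norm.mpr hun
    have h1 : |dotProduct u (M.mulVec u)| ≤ C₀ := hmax humem
    have hfx := form_homog M ‖x‖ u
    rw [← hxu] at hfx
    have h2 : |dotProduct x (M.mulVec x)| = ‖x‖ ^ 2 * |dotProduct u (M.mulVec u)| := by
      rw [hfx, abs_mul, abs_of_nonneg (by positivity : (0:ℝ) ≤ ‖x‖ ^ 2)]
    nlinarith [sq_nonneg ‖x‖, abs_nonneg (dotProduct u (M.mulVec u))]


section Main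

variable (n : ℕ) (m : ℕ → ℝ)

lemma exists_delta_k
    (heven : ∀ k : ℕ, 1 ≤ k → 2 * k ≤ n →
      (((1 : ℝ) / 2) • (Matrix.transpose (Hmat k) * Amat m k + Amat m k * Hmat k)).PosDef)
    (hodd : ∀ k : ℕ, 2 * k + 1 ≤ n →
      (((1 : ℝ) / 2) • (Matrix.transpose (Hmat k) * Bmat m k + Bmat m k * Hmat k)).PosDef)
    (p : ℕ → ℝ) (k : ℕ) :
    ∃ δ > 0, ∀ δ', 0 ≤ δ' → δ' ≤ δ →
      (∀ Q : Polynomial ℝ, Q.natDegree = k → 1 ≤ k → 2 * k ≤ n →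
        0 ≤ Lf (Q * Q.comp (X - 1)) (fun t => m t - δ' * p t)) ∧
      (∀ Q : Polynomial ℝ, Q.natDegree = k → 2 * k + 1 ≤ n →
        0 ≤ Lf (X * (Q * Q.comp (X - 1))) (fun t => m t - δ' * p t)) := by
  have he : ∃ δ > 0, ∀ δ', 0 ≤ δ' → δ' ≤ δ →
      ∀ Q : Polynomial ℝ, Q.natDegree = k → 1 ≤ k → 2 * k ≤ n →
        0 ≤ Lf (Q * Q.comp (X - 1)) (fun t => m t - δ' * p t) := by
    by_cases hcond : 1 ≤ k ∧ 2 * k ≤ n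
    · obtain ⟨c, hc, hlow⟩ := quad_lower _ (heven k hcond.1 hcond.2)
      obtain ⟨C, hC, hupp⟩ := quad_upper
        (((1 : ℝ) / 2) • (Matrix.transpose (Hmat k) * Amat p k + Amat p k * Hmat k))
      refine ⟨c / C, by positivity, ?_⟩
      intro δ' hδ'0 hδ' Q hQk _ _
      set x : Fin (k + 1) → ℝ := fun i => Q.coeff i with hx
      have h1 := form_even m k Q hQk.le
      have h2 := form_even p k Q hQk.le
      rw [Lf_sub_fun, ← h1, ← h2]
      have hl := hlow x
      have hu := (abs_le.mp (hupp x)).2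
      have hδC : δ' * C ≤ c := (le_div_iff₀ hC).mp hδ'
      nlinarith [sq_nonneg ‖x‖, mul_le_mul_of_nonneg_left hu hδ'0]
    · refine ⟨1, one_pos, ?_⟩
      intro δ' _ _ Q hQk h1 h2
      exact absurd ⟨h1, h2⟩ hcond
  have ho : ∃ δ > 0, ∀ δ', 0 ≤ δ' → δ' ≤ δ →
      ∀ Q : Polynomial ℝ, Q.natDegree = k → 2 * k + 1 ≤ n →
        0 ≤ Lf (X * (Q * Q.comp (X - 1))) (fun t => m t - δ' * p t) := by
    by_cases hcond : 2 * k + 1 ≤ n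
    · obtain ⟨c, hc, hlow⟩ := quad_lower _ (hodd k hcond)
      obtain ⟨C, hC, hupp⟩ := quad_upper
        (((1 : ℝ) / 2) • (Matrix.transpose (Hmat k) * Bmat p k + Bmat p k * Hmat k))
      refine ⟨c / C, by positivity, ?_⟩
      intro δ' hδ'0 hδ' Q hQk _
      set x : Fin (k + 1) → ℝ := fun i => Q.coeff i with hx
      have h1 := form_odd m k Q hQk.le
      have h2 := form_odd p k Q hQk.le
      rw [Lf_sub_fun, ← h1, ← h2]
      have hl := hlow x
      have hu := (abs_le.mp (hupp x)).2
      have hδC : δ' * C ≤ c := (le_div_iff₀ hC).mp hδ'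
      nlinarith [sq_nonneg ‖x‖, mul_le_mul_of_nonneg_left hu hδ'0]
    · refine ⟨1, one_pos, ?_⟩
      intro δ' _ _ Q hQk h1
      exact absurd h1 hcond
  obtain ⟨δ₁, hδ₁, H₁⟩ := he
  obtain ⟨δ₂, hδ₂, H₂⟩ := ho
  refine ⟨min δ₁ δ₂, lt_min hδ₁ hδ₂, ?_⟩
  intro δ' h0 hδ'
  exact ⟨H₁ δ' h0 (le_trans hδ' (min_le_left _ _)),
    H₂ δ' h0 (le_trans hδ' (min_le_right _ _))⟩

lemma exists_delta_upto
    (heven : ∀ k : ℕ, 1 ≤ k → 2 * k ≤ n →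
      (((1 : ℝ) / 2) • (Matrix.transpose (Hmat k) * Amat m k + Amat m k * Hmat k)).PosDef)
    (hodd : ∀ k : ℕ, 2 * k + 1 ≤ n →
      (((1 : ℝ) / 2) • (Matrix.transpose (Hmat k) * Bmat m k + Bmat m k * Hmat k)).PosDef)
    (p : ℕ → ℝ) : ∀ K : ℕ,
    ∃ δ > 0, ∀ δ', 0 ≤ δ' → δ' ≤ δ → ∀ k ≤ K,
      (∀ Q : Polynomial ℝ, Q.natDegree = k → 1 ≤ k → 2 * k ≤ n →
        0 ≤ Lf (Q * Q.comp (X - 1)) (fun t => m t - δ' * p t)) ∧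
      (∀ Q : Polynomial ℝ, Q.natDegree = k → 2 * k + 1 ≤ n →
        0 ≤ Lf (X * (Q * Q.comp (X - 1))) (fun t => m t - δ' * p t)) := by
  intro K
  induction K with
  | zero =>
      obtain ⟨δ, hδ, H⟩ := exists_delta_k n m heven hodd p 0
      exact ⟨δ, hδ, fun δ' h0 hδ' k hk => by
        rw [Nat.le_zero.mp hk]; exact H δ' h0 hδ'⟩
  | succ K ih =>
      obtain ⟨δ₁, hδ₁, H₁⟩ := ih
      obtain ⟨δ₂, hδ₂, H₂⟩ := exists_delta_k n m heven hodd p (K + 1)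
      refine ⟨min δ₁ δ₂, lt_min hδ₁ hδ₂, ?_⟩
      intro δ' h0 hδ' k hk
      rcases Nat.lt_or_ge k (K + 1) with h | h
      · exact H₁ δ' h0 (le_trans hδ' (min_le_left _ _)) k (by omega)
      · have : k = K + 1 := by omega
        rw [this]
        exact H₂ δ' h0 (le_trans hδ' (min_le_right _ _))

lemma exists_hypL (hm0 : m 0 = 1)
    (heven : ∀ k : ℕ, 1 ≤ k → 2 * k ≤ n →
      (((1 : ℝ) / 2) • (Matrix.transpose (Hmat k) * Amat m k + Amat m k * Hmat k)).PosDef)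
    (hodd : ∀ k : ℕ, 2 * k + 1 ≤ n →
      (((1 : ℝ) / 2) • (Matrix.transpose (Hmat k) * Bmat m k + Bmat m k * Hmat k)).PosDef)
    (p : ℕ → ℝ) :
    ∃ δ > 0, hypL n (fun t => m t - δ * p t) := by
  obtain ⟨δ₁, hδ₁, H⟩ := exists_delta_upto n m heven hodd p n
  set δ := min δ₁ (1 / (1 + |p 0|)) with hδdef
  have hδpos : 0 < δ := lt_min hδ₁ (by positivity)
  have hδle : δ ≤ δ₁ := min_le_left _ _
  have hguard : δ * p 0 ≤ 1 := by
    have h1 : δ ≤ 1 / (1 + |p 0|) := min_le_right _ _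
    have h2 : δ * p 0 ≤ δ * |p 0| :=
      mul_le_mul_of_nonneg_left (le_abs_self _) hδpos.le
    have h3 : δ * |p 0| ≤ (1 / (1 + |p 0|)) * |p 0| :=
      mul_le_mul_of_nonneg_right h1 (abs_nonneg _)
    have h4 : (1 / (1 + |p 0|)) * |p 0| ≤ 1 := by
      rw [div_mul_eq_mul_div, div_le_one (by positivity)]
      linarith [abs_nonneg (p 0)]
    linarith
  refine ⟨δ, hδpos, ?_, ?_⟩
  · intro Q hQ
    rcases Nat.eq_zero_or_pos Q.natDegree with h0 | h1
    · obtain ⟨c, rfl⟩ := Polynomial.natDegree_eq_zero.mp h0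
      have hcomp : (C c : Polynomial ℝ).comp (X - 1) = C c := C_comp
      rw [hcomp, ← C_mul, Lf_C]
      have : m 0 - δ * p 0 ≥ 0 := by rw [hm0]; linarith
      nlinarith [mul_self_nonneg c]
    · have hk : Q.natDegree ≤ n := by omega
      exact (H δ (le_of_lt hδpos) hδle Q.natDegree hk).1 Q rfl h1 hQ
  · intro Q hQ
    have hk : Q.natDegree ≤ n := by omega
    exact (H δ (le_of_lt hδpos) hδle Q.natDegree hk).2 Q rfl hQ

/-- The key positivity theorem: `Lf` is strictly positive on nonzero
polynomials nonnegative on `ℕ`. -/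
theorem Lpos (hm0 : m 0 = 1)
    (heven : ∀ k : ℕ, 1 ≤ k → 2 * k ≤ n →
      (((1 : ℝ) / 2) • (Matrix.transpose (Hmat k) * Amat m k + Amat m k * Hmat k)).PosDef)
    (hodd : ∀ k : ℕ, 2 * k + 1 ≤ n →
      (((1 : ℝ) / 2) • (Matrix.transpose (Hmat k) * Bmat m k + Bmat m k * Hmat k)).PosDef)
    (P : Polynomial ℝ) (hP0 : P ≠ 0) (hPd : P.natDegree ≤ n)
    (hge : ∀ x : ℕ, 0 ≤ P.eval (x : ℝ)) : 0 < Lf P m := by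
  -- step 1: Lf P w ≥ 0 for every w satisfying hypL
  have key : ∀ w : ℕ → ℝ, hypL n w → 0 ≤ Lf P w := by
    intro w hw
    have hw0 : 0 ≤ w 0 := by
      have h1 := hw.1 1 (by simp)
      have h2 : ((1 : Polynomial ℝ) * (1 : Polynomial ℝ).comp (X - 1)) = 1 := by simp
      rw [h2] at h1
      have h3 : Lf 1 w = w 0 := by
        have := Lf_C 1 w
        rw [C_1] at this
        rw [this, one_mul]
      linarith [h1, h3.symm.le]
    have hstep : ∀ ε : ℝ, 0 < ε → 0 ≤ Lf P w + ε * w 0 := by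
      intro ε hε
      have hpos : ∀ x : ℕ, 0 < (P + C ε).eval (x : ℝ) := by
        intro x
        rw [eval_add, eval_C]
        linarith [hge x]
      have hdeg : (P + C ε).natDegree ≤ n := by
        rw [natDegree_add_C]; exact hPd
      have hIG : InG n (P + C ε) := pos_InG (P + C ε).natDegree (P + C ε) le_rfl n hdeg hpos
      have := InG_Lf_nonneg hIG hw
      rw [Lf_add, Lf_C] at this
      linarith
    by_contra hneg
    push_neg at hneg
    have hε : 0 < -Lf P w / (2 * (w 0 + 1)) := by
      apply div_pos (by linarith) (by linarith)
    have := hstep _ hε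
    have h2 : -Lf P w / (2 * (w 0 + 1)) * w 0 ≤ -Lf P w / 2 := by
      rw [div_mul_eq_mul_div, div_le_div_iff₀ (by linarith) (by norm_num)]
      nlinarith
    linarith
  -- step 2: perturb
  set p : ℕ → ℝ := fun t => P.coeff t with hp
  obtain ⟨δ, hδ, hhyp⟩ := exists_hypL n m hm0 heven hodd p
  have h1 := key _ hhyp
  rw [Lf_sub_fun] at h1
  have h2 : Lf P p = ∑ k ∈ Finset.range (n + 1), P.coeff k * P.coeff k := by
    rw [Lf_range P p (n + 1) (by omega)]
  have h3 : 0 < Lf P p := by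
    rw [h2]
    have hnz : P.coeff P.natDegree ≠ 0 := by
      rw [← Polynomial.leadingCoeff]
      exact Polynomial.leadingCoeff_ne_zero.mpr hP0
    have hsingle : P.coeff P.natDegree * P.coeff P.natDegree
        ≤ ∑ k ∈ Finset.range (n + 1), P.coeff k * P.coeff k := by
      apply Finset.single_le_sum (f := fun k => P.coeff k * P.coeff k)
      · intro i _
        exact mul_self_nonneg _
      · exact Finset.mem_range.mpr (by omega)
    have : 0 < P.coeff P.natDegree * P.coeff P.natDegree := mul_self_pos.mpr hnz
    linarith
  nlinarith

end Main

section Sep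

variable (n : ℕ)

/-- the moment vector of the Dirac measure at `x`. -/
def vnd (x : ℕ) : Fin (n + 1) → ℝ := fun k => (x : ℝ) ^ (k : ℕ)

/-- the cone of moment vectors of finitely supported nonneg measures. -/
def Cset : Set (Fin (n + 1) → ℝ) :=
  {v | ∃ (N : ℕ) (c : ℕ → ℝ), (∀ i, 0 ≤ c i) ∧ v = ∑ i ∈ Finset.range N, c i • vnd n i}

lemma Cset_pad {v : Fin (n + 1) → ℝ} {N : ℕ} {c : ℕ → ℝ}
    (h : v = ∑ i ∈ Finset.range N, c i • vnd n i) (N' : ℕ) (hN : N ≤ N') :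
    v = ∑ i ∈ Finset.range N', (if i < N then c i else 0) • vnd n i := by
  rw [h]
  symm
  rw [← Finset.sum_subset (Finset.range_subset_range.mpr hN) (fun i _ hi' => by
    simp only [Finset.mem_range] at hi'
    rw [if_neg hi', zero_smul])]
  exact Finset.sum_congr rfl (fun i hi => by
    simp only [Finset.mem_range] at hi
    rw [if_pos hi])

lemma Cset_zero : (0 : Fin (n + 1) → ℝ) ∈ Cset n :=
  ⟨0, fun _ => 0, fun _ => le_rfl, by simp⟩

lemma Cset_add {v w : Fin (n + 1) → ℝ} (hv : v ∈ Cset n) (hw : w ∈ Cset n) :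
    v + w ∈ Cset n := by
  obtain ⟨N₁, c₁, hc₁, h₁⟩ := hv
  obtain ⟨N₂, c₂, hc₂, h₂⟩ := hw
  set N := max N₁ N₂ with hN
  have e₁ := Cset_pad n h₁ N (le_max_left _ _)
  have e₂ := Cset_pad n h₂ N (le_max_right _ _)
  refine ⟨N, (fun i => (if i < N₁ then c₁ i else 0) + (if i < N₂ then c₂ i else 0)),
    ?_, ?_⟩
  · intro i
    have h1 := hc₁ i
    have h2 := hc₂ i
    dsimp only
    split <;> split <;> linarith
  · rw [e₁, e₂, ← Finset.sum_add_distrib]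
    refine Finset.sum_congr rfl ?_
    intro i _
    rw [add_smul]

lemma Cset_smul {v : Fin (n + 1) → ℝ} {t : ℝ} (ht : 0 ≤ t) (hv : v ∈ Cset n) :
    t • v ∈ Cset n := by
  obtain ⟨N, c, hc, h⟩ := hv
  refine ⟨N, fun i => t * c i, fun i => mul_nonneg ht (hc i), ?_⟩
  rw [h, Finset.smul_sum]
  refine Finset.sum_congr rfl ?_
  intro i _
  rw [smul_smul]

lemma Cset_convex : Convex ℝ (Cset n) := by
  intro v hv w hw a b ha hb hab
  exact Cset_add n (Cset_smul n ha hv) (Cset_smul n hb hw)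

lemma Cset_vnd (x : ℕ) : vnd n x ∈ Cset n := by
  refine ⟨x + 1, fun i => if i = x then 1 else 0,
    fun i => by dsimp only; split <;> norm_num, ?_⟩
  symm
  rw [Finset.sum_eq_single_of_mem x (Finset.mem_range.mpr (by omega)) (fun i _ hi => by
    dsimp only
    rw [if_neg hi, zero_smul])]
  dsimp only
  rw [if_pos rfl, one_smul]

/-- the (transposed) Vandermonde matrix at nodes `0,…,n`. -/
noncomputable def Vmat : Matrix (Fin (n + 1)) (Fin (n + 1)) ℝ :=
  Matrix.of fun k i => ((i : ℕ) : ℝ) ^ (k : ℕ)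

lemma Vmat_det_ne : (Vmat n).det ≠ 0 := by
  have h : Vmat n = (Matrix.vandermonde (fun i : Fin (n + 1) => ((i : ℕ) : ℝ))).transpose := by
    apply Matrix.ext
    intro k i
    rfl
  rw [h, Matrix.det_transpose, Matrix.det_vandermonde]
  rw [Finset.prod_ne_zero_iff]
  intro i _
  rw [Finset.prod_ne_zero_iff]
  intro j hj
  have hij : i < j := Finset.mem_Ioi.mp hj
  have h2 : (i : ℕ) < (j : ℕ) := hij
  have h3 : ((i : ℕ) : ℝ) < ((j : ℕ) : ℝ) := by exact_mod_cast h2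
  exact sub_ne_zero.mpr (ne_of_gt h3)

lemma mulVec_continuous {r : ℕ} (M : Matrix (Fin r) (Fin r) ℝ) :
    Continuous (fun v : Fin r → ℝ => M.mulVec v) := by
  apply continuous_pi
  intro i
  unfold Matrix.mulVec dotProduct
  apply continuous_finset_sum
  intro j _
  exact Continuous.mul continuous_const (continuous_apply j)

/-- `Vmat` as a homeomorphism via `mulVec`. -/
noncomputable def Vhom : (Fin (n + 1) → ℝ) ≃ₜ (Fin (n + 1) → ℝ) where
  toFun := fun v => (Vmat n).mulVec v
  invFun := fun v => (Vmat n)⁻¹.mulVec v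
  left_inv := by
    intro v
    show (Vmat n)⁻¹.mulVec ((Vmat n).mulVec v) = v
    rw [Matrix.mulVec_mulVec, Matrix.nonsing_inv_mul _ (isUnit_iff_ne_zero.mpr (Vmat_det_ne n)),
      Matrix.one_mulVec]
  right_inv := by
    intro v
    show (Vmat n).mulVec ((Vmat n)⁻¹.mulVec v) = v
    rw [Matrix.mulVec_mulVec, Matrix.mul_nonsing_inv _ (isUnit_iff_ne_zero.mpr (Vmat_det_ne n)),
      Matrix.one_mulVec]
  continuous_toFun := mulVec_continuous _
  continuous_invFun := mulVec_continuous _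

lemma Vmat_mulVec_mem {u : Fin (n + 1) → ℝ} (hu : ∀ i, 0 ≤ u i) :
    (Vmat n).mulVec u ∈ Cset n := by
  refine ⟨n + 1, fun i => if h : i < n + 1 then u ⟨i, h⟩ else 0, ?_, ?_⟩
  · intro i
    dsimp only
    split
    · exact hu _
    · exact le_rfl
  · funext k
    show dotProduct (fun i => Vmat n k i) u = _
    unfold dotProduct
    rw [← Fin.sum_univ_eq_sum_range
      (fun i => (if h : i < n + 1 then u ⟨i, h⟩ else 0) • vnd n i) (n + 1)]
    rw [Finset.sum_apply]
    refine Finset.sum_congr rfl ?_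
    intro i _
    rw [dif_pos i.isLt]
    show Vmat n k i * u i = u ⟨(i : ℕ), i.isLt⟩ * vnd n (i : ℕ) k
    have h1 : (⟨(i : ℕ), i.isLt⟩ : Fin (n + 1)) = i := by ext; rfl
    rw [h1]
    show ((i : ℕ) : ℝ) ^ (k : ℕ) * u i = u i * ((i : ℕ) : ℝ) ^ (k : ℕ)
    ring

/-- interior point of the moment cone. -/
lemma wpt_interior : (Vmat n).mulVec (fun _ => 1) ∈ interior (Cset n) := by
  set O : Set (Fin (n + 1) → ℝ) := {u | ∀ i, 0 < u i} with hO
  have hOopen : IsOpen O := by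
    have : O = ⋂ i : Fin (n + 1), (fun u : Fin (n + 1) → ℝ => u i) ⁻¹' Set.Ioi 0 := by
      ext u; simp [hO, Set.mem_iInter]
    rw [this]
    exact isOpen_iInter_of_finite fun i => (continuous_apply i).isOpen_preimage _ isOpen_Ioi
  have himg : (fun v => (Vmat n).mulVec v) '' O ⊆ Cset n := by
    rintro _ ⟨u, hu, rfl⟩
    exact Vmat_mulVec_mem n (fun i => (hu i).le)
  have hopen : IsOpen ((fun v => (Vmat n).mulVec v) '' O) := (Vhom n).isOpenMap O hOopen
  apply interior_maximal himg hopen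
  exact ⟨fun _ => 1, fun i => one_pos, rfl⟩

lemma closure_smul_mem {t : ℝ} (ht : 0 ≤ t) {a : Fin (n + 1) → ℝ}
    (ha : a ∈ closure (Cset n)) : t • a ∈ closure (Cset n) :=
  map_mem_closure (continuous_const_smul t) ha (fun _ hy => Cset_smul n ht hy)

lemma closure_add_mem {a b : Fin (n + 1) → ℝ} (ha : a ∈ closure (Cset n))
    (hb : b ∈ closure (Cset n)) : a + b ∈ closure (Cset n) := by
  have hmid : (1 / 2 : ℝ) • a + (1 / 2 : ℝ) • b ∈ closure (Cset n) :=
    (Cset_convex n).closure ha hb (by norm_num) (by norm_num) (by norm_num)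
  have := closure_smul_mem n (by norm_num : (0:ℝ) ≤ 2) hmid
  have heq : (2 : ℝ) • ((1 / 2 : ℝ) • a + (1 / 2 : ℝ) • b) = a + b := by
    rw [smul_add, smul_smul, smul_smul]
    norm_num
  rwa [heq] at this

lemma interior_add_closure {a b : Fin (n + 1) → ℝ}
    (ha : a ∈ interior (closure (Cset n))) (hb : b ∈ closure (Cset n)) :
    a + b ∈ interior (closure (Cset n)) := by
  have hsub : (fun v => v + b) '' interior (closure (Cset n)) ⊆ closure (Cset n) := by
    rintro _ ⟨v, hv, rfl⟩
    exact closure_add_mem n (interior_subset hv) hb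
  have hopen : IsOpen ((fun v => v + b) '' interior (closure (Cset n))) :=
    (isOpenMap_add_right b) _ isOpen_interior
  exact interior_maximal hsub hopen ⟨a, ha, rfl⟩

lemma interior_smul_mem {t : ℝ} (ht : 0 < t) {a : Fin (n + 1) → ℝ}
    (ha : a ∈ interior (closure (Cset n))) :
    t • a ∈ interior (closure (Cset n)) := by
  have hsub : (fun v : Fin (n + 1) → ℝ => t • v) '' interior (closure (Cset n))
      ⊆ closure (Cset n) := by
    rintro _ ⟨v, hv, rfl⟩
    exact closure_smul_mem n ht.le (interior_subset hv)
  have hopen : IsOpen ((fun v : Fin (n + 1) → ℝ => t • v) '' interior (closure (Cset n))) :=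
    (isOpenMap_smul₀ (ne_of_gt ht)) _ isOpen_interior
  exact interior_maximal hsub hopen ⟨a, ha, rfl⟩

end Sep

section Final

variable (n : ℕ) (m : ℕ → ℝ)

theorem mvec_mem_Cset
    (hstar : ∀ P : Polynomial ℝ, P ≠ 0 → P.natDegree ≤ n →
      (∀ x : ℕ, 0 ≤ P.eval (x : ℝ)) → 0 < Lf P m) :
    (fun k : Fin (n + 1) => m (k : ℕ)) ∈ Cset n := by
  classical
  set mv : Fin (n + 1) → ℝ := fun k => m (k : ℕ) with hmv
  set w : Fin (n + 1) → ℝ := (Vmat n).mulVec (fun _ => 1) with hw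
  have hwint : w ∈ interior (Cset n) := wpt_interior n
  set s : Set (Fin (n + 1) → ℝ) := interior (closure (Cset n)) with hs
  have hws : w ∈ s := interior_mono subset_closure hwint
  have hsconv : Convex ℝ s := ((Cset_convex n).closure).interior
  have hsopen : IsOpen s := isOpen_interior
  have hmem : mv ∈ s := by
    by_contra hnot
    obtain ⟨f, hf⟩ := geometric_hahn_banach_open_point hsconv hsopen hnot
    have h0cl : (0 : Fin (n + 1) → ℝ) ∈ closure s := by
      have htend : Filter.Tendsto (fun j : ℕ => ((1 : ℝ) / (j + 1)) • w)
          Filter.atTop (nhds 0) := by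
        have h2 := (tendsto_one_div_add_atTop_nhds_zero_nat (𝕜 := ℝ)).smul_const w
        rwa [zero_smul] at h2
      apply mem_closure_of_tendsto htend
      filter_upwards with j
      exact interior_smul_mem n (by positivity) hws
    have hfmv : 0 ≤ f mv := by
      have hcl : closure s ⊆ {v | f v ≤ f mv} :=
        closure_minimal (fun a ha => (hf a ha).le) (isClosed_le f.continuous continuous_const)
      have := hcl h0cl
      simpa using this
    have hvnd : ∀ x : ℕ, f (vnd n x) ≤ 0 := by
      intro x
      by_contra hpos
      push_neg at hpos
      have hta : ∀ t : ℝ, 0 < t → f w + t * f (vnd n x) < f mv := by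
        intro t ht
        have h1 : w + t • vnd n x ∈ s :=
          interior_add_closure n hws (closure_smul_mem n ht.le (subset_closure (Cset_vnd n x)))
        have := hf _ h1
        rwa [map_add, map_smul, smul_eq_mul] at this
      have h1 := hta ((|f mv| + |f w| + 1) / f (vnd n x)) (by positivity)
      rw [div_mul_cancel₀ _ (ne_of_gt hpos)] at h1
      have h2 := le_abs_self (f mv)
      have h3 := neg_abs_le (f w)
      linarith
    set pc : Fin (n + 1) → ℝ := fun k => f (fun j => if k = j then (1 : ℝ) else 0) with hpc
    have flin : ∀ v : Fin (n + 1) → ℝ, f v = ∑ k : Fin (n + 1), v k * pc k := by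
      intro v
      conv_lhs => rw [pi_eq_sum_univ v]
      rw [map_sum]
      refine Finset.sum_congr rfl ?_
      intro k _
      rw [map_smul, smul_eq_mul]
    set P₀ : Polynomial ℝ := ∑ k : Fin (n + 1), C (pc k) * X ^ (k : ℕ) with hP₀
    have hP₀coeff : ∀ k : Fin (n + 1), P₀.coeff (k : ℕ) = pc k := by
      intro k
      rw [hP₀, Polynomial.finset_sum_coeff]
      rw [Finset.sum_eq_single_of_mem k (Finset.mem_univ k) ?_]
      · rw [Polynomial.coeff_C_mul, Polynomial.coeff_X_pow, if_pos rfl, mul_one]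
      · intro j _ hj
        rw [Polynomial.coeff_C_mul, Polynomial.coeff_X_pow, if_neg ?_, mul_zero]
        intro hjk
        exact hj ((Fin.ext hjk).symm)
    have hP₀eval : ∀ x : ℕ, P₀.eval (x : ℝ) = f (vnd n x) := by
      intro x
      rw [hP₀, Polynomial.eval_finset_sum, flin (vnd n x)]
      refine Finset.sum_congr rfl ?_
      intro k _
      rw [eval_mul, eval_C, eval_pow, eval_X]
      show pc k * (x : ℝ) ^ (k : ℕ) = vnd n x k * pc k
      show pc k * (x : ℝ) ^ (k : ℕ) = (x : ℝ) ^ (k : ℕ) * pc k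
      ring
    have hP₀deg : P₀.natDegree ≤ n := by
      rw [hP₀]
      refine Polynomial.natDegree_sum_le_of_forall_le _ _ ?_
      intro k _
      exact le_trans (Polynomial.natDegree_C_mul_X_pow_le _ _) (by omega)
    have hP₀ne : P₀ ≠ 0 := by
      intro h
      have hpc0 : ∀ k : Fin (n + 1), pc k = 0 := by
        intro k
        rw [← hP₀coeff k, h, Polynomial.coeff_zero]
      have hf0 : ∀ v, f v = 0 := by
        intro v
        rw [flin v]
        simp [hpc0]
      have := hf w hws
      rw [hf0 w, hf0 mv] at this
      exact lt_irrefl 0 this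
    have hLf : Lf P₀ m = f mv := by
      rw [Lf_range P₀ m (n + 1) (by omega),
        ← Fin.sum_univ_eq_sum_range (fun t => P₀.coeff t * m t) (n + 1), flin mv]
      refine Finset.sum_congr rfl ?_
      intro k _
      rw [hP₀coeff k]
      show pc k * m (k : ℕ) = mv k * pc k
      show pc k * m (k : ℕ) = m (k : ℕ) * pc k
      ring
    have hstar' := hstar (-P₀) (neg_ne_zero.mpr hP₀ne) (by rwa [natDegree_neg]) ?_
    · rw [Lf_neg, hLf] at hstar'
      linarith
    · intro x
      rw [eval_neg, hP₀eval x]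
      linarith [hvnd x]
  obtain ⟨ε, hε, hball⟩ := Metric.mem_nhds_iff.mp (mem_interior_iff_mem_nhds.mp hmem)
  set θ : ℝ := ε / (2 * (‖mv - w‖ + 1)) with hθ
  have hθpos : 0 < θ := by positivity
  set mv' := mv + θ • (mv - w) with hmv'
  have hmv'cl : mv' ∈ closure (Cset n) := by
    apply hball
    rw [Metric.mem_ball, dist_eq_norm]
    have hsub : mv' - mv = θ • (mv - w) := by
      rw [hmv']; abel
    rw [hsub, norm_smul, Real.norm_eq_abs, abs_of_pos hθpos]
    have hD : (0 : ℝ) ≤ ‖mv - w‖ := norm_nonneg _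
    have hhalf : θ * ‖mv - w‖ ≤ ε / 2 := by
      rw [hθ, div_mul_eq_mul_div, div_le_div_iff₀ (by positivity) (by norm_num)]
      nlinarith
    linarith
  have h1θ : (0 : ℝ) < 1 + θ := by linarith
  have hcombo := Convex.combo_interior_closure_mem_interior (Cset_convex n) hwint hmv'cl
      (a := θ / (1 + θ)) (b := 1 / (1 + θ)) (by positivity) (by positivity)
      (by rw [← add_div, div_eq_one_iff_eq (ne_of_gt h1θ)]; ring)
  have heq : (θ / (1 + θ)) • w + (1 / (1 + θ)) • mv' = mv := by
    rw [hmv']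
    match_scalars <;> field_simp <;> ring
  rw [heq] at hcombo
  exact interior_subset hcombo

theorem realizable_of_star
    (hstar : ∀ P : Polynomial ℝ, P ≠ 0 → P.natDegree ≤ n →
      (∀ x : ℕ, 0 ≤ P.eval (x : ℝ)) → 0 < Lf P m) :
    RealizableN0 n m := by
  obtain ⟨N, c, hc, hsum⟩ := mvec_mem_Cset n m hstar
  refine ⟨fun x => if x < N then c x else 0, ?_, ?_⟩
  · intro x
    dsimp only
    split
    · exact hc x
    · exact le_rfl
  · intro k hk
    have hk' : k < n + 1 := by omega
    have hval : m k = ∑ x ∈ Finset.range N, c x * (x : ℝ) ^ k := by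
      have h1 := congrFun hsum ⟨k, hk'⟩
      rw [Finset.sum_apply] at h1
      simpa [vnd] using h1
    have hvanish : ∀ x ∉ Finset.range N,
        (x : ℝ) ^ k * (if x < N then c x else 0) = 0 := by
      intro x hx
      rw [Finset.mem_range] at hx
      rw [if_neg hx, mul_zero]
    have H : HasSum (fun x : ℕ => (x : ℝ) ^ k * (if x < N then c x else 0)) _ :=
        hasSum_sum_of_ne_finset_zero hvanish
    have hSeq : ∑ x ∈ Finset.range N, (x : ℝ) ^ k * (if x < N then c x else 0)
        = ∑ x ∈ Finset.range N, c x * (x : ℝ) ^ k := by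
      refine Finset.sum_congr rfl ?_
      intro x hx
      rw [Finset.mem_range] at hx
      rw [if_pos hx]
      ring
    rw [hSeq] at H
    rw [hval]
    exact H

end Final

end SuffAux

/-- Theorem 7.1: if the matrices `D_j` (`D_{2k} = (H(k)ᵀA(k)+A(k)H(k))/2`,
`D_{2k+1} = (H(k)ᵀB(k)+B(k)H(k))/2`) are positive definite for `j = 1,…,n`,
then `m` is realizable on `ℕ₀`, and in fact I-realizable. -/
theorem sufficient_condition (n : ℕ) (hn : 1 ≤ n) (m : ℕ → ℝ) (hm0 : m 0 = 1)
    (heven : ∀ k : ℕ, 1 ≤ k → 2 * k ≤ n →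
      (((1 : ℝ) / 2) • (Matrix.transpose (Hmat k) * Amat m k + Amat m k * Hmat k)).PosDef)
    (hodd : ∀ k : ℕ, 2 * k + 1 ≤ n →
      (((1 : ℝ) / 2) • (Matrix.transpose (Hmat k) * Bmat m k + Bmat m k * Hmat k)).PosDef) :
    RealizableN0 n m ∧ IRealizable n m := by
  have hstar : ∀ P : Polynomial ℝ, P ≠ 0 → P.natDegree ≤ n →
      (∀ x : ℕ, 0 ≤ P.eval (x : ℝ)) → 0 < Lf P m :=
    fun P h1 h2 h3 => SuffAux.Lpos n m hm0 heven hodd P h1 h2 h3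
  have hreal : RealizableN0 n m := SuffAux.realizable_of_star n m hstar
  refine ⟨hreal, hreal, ?_⟩
  intro P hP
  rcases hP with h | h
  · exact hstar P h.1.ne_zero (le_of_eq h.2.1) h.2.2.2
  · exact hstar P h.1.ne_zero (by rw [h.2.1]; omega) h.2.2.2
end

section
/- Let n ≥ 3 and m = (m_1,…,m_n) ∈ ℝ^n with m_0 := 1, and suppose L_P(m) ≥ 0 for all P ∈ 𝒫_n. Then: (i) L_P(m) ≥ 0 for all P ∈ 𝒫_{n−2}; and (ii) if Q ∈ 𝒫_{n−2} satisfies L_Q(m) = 0, then L_{xQ}(m) ≤ 0, where (xQ)(x) := x·Q(x). -/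
open Polynomial

lemma Lf_add (P Q : Polynomial ℝ) (m : ℕ → ℝ) : Lf (P + Q) m = Lf P m + Lf Q m := by
  unfold Lf
  rw [Polynomial.sum_add_index] <;> simp [add_mul]

lemma Lf_C_mul (c : ℝ) (P : Polynomial ℝ) (m : ℕ → ℝ) : Lf (C c * P) m = c * Lf P m := by
  unfold Lf
  rw [← smul_eq_C_mul, Polynomial.sum_smul_index P c _ (by simp)]
  simp [Polynomial.sum, Finset.mul_sum, mul_assoc]

lemma Lf_key (a b : ℝ) (Q : Polynomial ℝ) (m : ℕ → ℝ) :
    Lf ((X - C a) * (X - C b) * Q) m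
      = Lf (X^2*Q) m - (a+b) * Lf (X*Q) m + (a*b) * Lf Q m := by
  have hid : (X - C a) * (X - C b) * Q
      = X^2*Q + C (-(a+b)) * (X*Q) + C (a*b) * Q := by
    simp only [map_neg, map_add, map_mul]
    ring
  rw [hid, Lf_add, Lf_add, Lf_C_mul, Lf_C_mul]
  ring

lemma exists_a (S : Finset ℕ) (r : ℝ) : ∃ a : ℕ, a ∉ S ∧ a + 1 ∉ S ∧ r ≤ (a : ℝ) := by
  refine ⟨(S.sup id + 1) ⊔ ⌈r⌉₊, ?_, ?_, ?_⟩
  · intro hmem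
    have := Finset.le_sup (f := id) hmem
    simp only [id] at this
    omega
  · intro hmem
    have := Finset.le_sup (f := id) hmem
    simp only [id] at this
    omega
  · calc r ≤ (⌈r⌉₊ : ℝ) := Nat.le_ceil r
      _ ≤ _ := by exact_mod_cast Nat.cast_le.mpr (le_max_right _ _)

lemma polyP_insert (n : ℕ) (hn : 3 ≤ n) (Q : Polynomial ℝ) (hQ : PolyP (n-2) Q) (a : ℕ)
    (S : Finset ℕ) (hScard : S.card = n - 2) (hSeq : Q = ∏ b ∈ S, (X - C (b : ℝ)))
    (haS : a ∉ S) (ha1S : a + 1 ∉ S) :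
    PolyP n ((X - C (a : ℝ)) * (X - C ((a : ℝ) + 1)) * Q) := by
  have haT : a ∉ insert (a + 1) S := by simp [haS]
  have hprod : (X - C (a : ℝ)) * (X - C ((a : ℝ) + 1)) * Q
      = ∏ b ∈ insert a (insert (a + 1) S), (X - C (b : ℝ)) := by
    rw [Finset.prod_insert haT, Finset.prod_insert ha1S, hSeq, ← mul_assoc]
    push_cast
    ring
  have hcard : (insert a (insert (a + 1) S)).card = n := by
    rw [Finset.card_insert_of_notMem haT, Finset.card_insert_of_notMem ha1S, hScard]
    omega
  refine ⟨?_, ?_, ⟨_, hcard, hprod⟩, ?_⟩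
  · rw [hprod]
    exact monic_prod_of_monic _ _ fun b _ => monic_X_sub_C _
  · rw [hprod, natDegree_prod_of_monic _ _ fun b _ => monic_X_sub_C _]
    simp only [natDegree_X_sub_C, Finset.sum_const, smul_eq_mul, mul_one]
    exact hcard
  · intro x
    have hQx := hQ.2.2.2 x
    simp only [eval_mul, eval_sub, eval_X, eval_C]
    rcases le_or_gt x a with hx | hx
    · have h1 : (x : ℝ) ≤ (a : ℝ) := by exact_mod_cast hx
      have h2 : (0:ℝ) ≤ ((x:ℝ) - a) * ((x:ℝ) - ((a:ℝ)+1)) :=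
        by nlinarith
      exact mul_nonneg h2 hQx
    · have h1 : (a : ℝ) + 1 ≤ (x : ℝ) := by exact_mod_cast hx
      have h2 : (0:ℝ) ≤ ((x:ℝ) - a) * ((x:ℝ) - ((a:ℝ)+1)) :=
        mul_nonneg (by linarith) (by linarith)
      exact mul_nonneg h2 hQx

lemma key (n : ℕ) (hn : 3 ≤ n) (m : ℕ → ℝ) (h : ∀ P, PolyP n P → 0 ≤ Lf P m)
    (Q : Polynomial ℝ) (hQ : PolyP (n-2) Q) (r : ℝ) :
    ∃ x : ℝ, r ≤ x ∧
      0 ≤ Lf (X^2*Q) m - (2*x+1) * Lf (X*Q) m + x*(x+1) * Lf Q m := by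
  obtain ⟨S, hScard, hSeq⟩ := hQ.2.2.1
  obtain ⟨a, haS, ha1S, har⟩ := exists_a S r
  refine ⟨(a : ℝ), har, ?_⟩
  have hP := h _ (polyP_insert n hn Q hQ a S hScard hSeq haS ha1S)
  rw [Lf_key] at hP
  refine le_of_le_of_eq hP (by ring)

/-- Lemma B.1: if `L_P(m) ≥ 0` for all `P ∈ 𝒫_n`, then `L_P(m) ≥ 0` for all
`P ∈ 𝒫_{n-2}`, and if `Q ∈ 𝒫_{n-2}` has `L_Q(m) = 0` then `L_{xQ}(m) ≤ 0`. -/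
theorem posdir (n : ℕ) (hn : 3 ≤ n) (m : ℕ → ℝ) (hm0 : m 0 = 1)
    (h : ∀ P, PolyP n P → 0 ≤ Lf P m) :
    (∀ P, PolyP (n - 2) P → 0 ≤ Lf P m) ∧
      ∀ Q, PolyP (n - 2) Q → Lf Q m = 0 → Lf (X * Q) m ≤ 0 := by
  constructor
  · intro Q hQ
    by_contra hC
    push_neg at hC
    set A := Lf (X^2*Q) m with hA
    set B := Lf (X*Q) m with hB
    set C0 := Lf Q m with hC0
    obtain ⟨x, hx1, hx2⟩ := key n hn m h Q hQ
      (max 1 ((|C0 - 2*B| + |A - B| + 1) / (-C0)))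
    have hx3 : (1:ℝ) ≤ x := le_trans (le_max_left _ _) hx1
    have hx4 : (|C0 - 2*B| + |A - B| + 1) / (-C0) ≤ x := le_trans (le_max_right _ _) hx1
    have hnc : (0:ℝ) < -C0 := by linarith
    have hx5 : |C0 - 2*B| + |A - B| + 1 ≤ (-C0) * x := by
      rw [div_le_iff₀ hnc] at hx4
      linarith [hx4]
    have e1 : x * (C0 - 2*B) ≤ x * |C0 - 2*B| :=
      mul_le_mul_of_nonneg_left (le_abs_self _) (by linarith)
    have e2 : A - B ≤ x * |A - B| := by
      calc A - B ≤ |A - B| := le_abs_self _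
        _ = 1 * |A - B| := (one_mul _).symm
        _ ≤ x * |A - B| := mul_le_mul_of_nonneg_right hx3 (abs_nonneg _)
    have e3 : x * ((-C0) * x) ≥ x * (|C0 - 2*B| + |A - B| + 1) :=
      mul_le_mul_of_nonneg_left hx5 (by linarith)
    nlinarith [hx2, e1, e2, e3]
  · intro Q hQ hQ0
    by_contra hB
    push_neg at hB
    set A := Lf (X^2*Q) m with hA
    set B := Lf (X*Q) m with hBB
    obtain ⟨x, hx1, hx2⟩ := key n hn m h Q hQ (max 0 (A / (2*B)))
    rw [hQ0, mul_zero, add_zero] at hx2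
    have hx3 : A / (2*B) ≤ x := le_trans (le_max_right _ _) hx1
    have hx0 : (0:ℝ) ≤ x := le_trans (le_max_left _ _) hx1
    have h2B : (0:ℝ) < 2*B := by linarith
    rw [div_le_iff₀ h2B] at hx3
    nlinarith [hx2, hx3, hB]
end

section
/- Let n ≥ 2 and m = (m_1,…,m_n) ∈ ℝ^n with m_0 := 1, and suppose L_P(m) ≥ 0 for all P ∈ 𝒫_n ∪ 𝒫_{n−1}. Then L_P(m) ≥ 0 for every P ∈ 𝒫_k and every k with 1 ≤ k ≤ n; moreover, if Q ∈ 𝒫_k with k ≤ n−2 satisfies L_Q(m) = 0, then L_{x^i Q}(m) = 0 for every i with 1 ≤ i ≤ n−1−k, where (x^i Q)(x) := x^i·Q(x). -/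
open Polynomial Finset Filter


open Polynomial

namespace AlgebraPropAux

/-- `Lf` as a linear map. -/
noncomputable def LfL (m : ℕ → ℝ) : Polynomial ℝ →ₗ[ℝ] ℝ :=
  Polynomial.lsum fun k => LinearMap.toSpanSingleton ℝ ℝ (m k)

lemma LfL_apply (m : ℕ → ℝ) (P : Polynomial ℝ) : LfL m P = Lf P m := by
  simp [LfL, Lf, Polynomial.lsum_apply, LinearMap.toSpanSingleton_apply, smul_eq_mul]

lemma Lf_X_sub_C_mul (m : ℕ → ℝ) (r : ℝ) (Q : ℝ[X]) :
    Lf ((X - C r) * Q) m = Lf (X * Q) m - r * Lf Q m := by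
  have hx : (X - C r) * Q = X * Q - r • Q := by
    rw [smul_eq_C_mul]; ring
  rw [← LfL_apply, hx, map_sub, map_smul, LfL_apply, LfL_apply, smul_eq_mul]

lemma ev_sign (g : ℝ[X]) (hg : ∀ᶠ N : ℕ in atTop, 0 ≤ g.eval (N : ℝ)) :
    0 ≤ g.leadingCoeff := by
  by_contra hneg
  push_neg at hneg
  rcases le_or_gt g.degree 0 with hd | hd
  · have hgC : g = C (g.coeff 0) := eq_C_of_degree_le_zero hd
    obtain ⟨N, hN⟩ := hg.exists
    have : g.eval (N : ℝ) = g.leadingCoeff := by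
      rw [Polynomial.leadingCoeff, Polynomial.natDegree_eq_zero_iff_degree_le_zero.mpr hd]
      conv_lhs => rw [hgC]
      simp
    rw [this] at hN; linarith
  · have h1 := g.tendsto_atBot_of_leadingCoeff_nonpos hd hneg.le
    have h2 : Tendsto (fun N : ℕ => g.eval (N : ℝ)) atTop atBot :=
      h1.comp tendsto_natCast_atTop_atTop
    have h3 := h2.eventually (eventually_lt_atBot (0 : ℝ))
    obtain ⟨N, hN1, hN2⟩ := (hg.and h3).exists
    linarith

lemma coeff_mk (F : ℕ → ℝ) (e u : ℕ) :
    (∑ t ∈ Finset.range (e + 1), C (F t) * X ^ t).coeff u =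
      if u ≤ e then F u else 0 := by
  rw [finset_sum_coeff]
  simp only [coeff_C_mul, coeff_X_pow, mul_ite, mul_one, mul_zero]
  rw [Finset.sum_ite_eq (Finset.range (e + 1)) u F]
  simp [Nat.lt_succ_iff]

lemma prod_neg_even {ι : Type*} (s : Finset ι) (he : Even s.card) (f : ι → ℝ[X]) :
    (∏ j ∈ s, -f j) = ∏ j ∈ s, f j := by
  have h1 : (∏ j ∈ s, -f j) = (-1) ^ s.card * ∏ j ∈ s, f j := by
    rw [← Finset.prod_const, ← Finset.prod_mul_distrib]
    simp [neg_one_mul]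
  rw [h1, he.neg_one_pow, one_mul]

lemma prod_neg_even' {ι : Type*} (s : Finset ι) (he : Even s.card) (f : ι → ℝ) :
    (∏ j ∈ s, -f j) = ∏ j ∈ s, f j := by
  have h1 : (∏ j ∈ s, -f j) = (-1) ^ s.card * ∏ j ∈ s, f j := by
    rw [← Finset.prod_const, ← Finset.prod_mul_distrib]
    simp [neg_one_mul]
  rw [h1, he.neg_one_pow, one_mul]

lemma extend (k e N : ℕ) (he : Even e) (Q : ℝ[X])
    (hnn : ∀ x : ℕ, 0 ≤ Q.eval (x : ℝ))
    (S : Finset ℕ) (hScard : S.card = k) (hSprod : Q = ∏ a ∈ S, (X - C (a : ℝ)))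
    (hN : ∀ a ∈ S, a < N) :
    PolyP (k + e) (Q * ∏ j ∈ Finset.range e, (X - C ((N + j : ℕ) : ℝ))) := by
  have hTm : (∏ j ∈ Finset.range e, (X - C ((N + j : ℕ) : ℝ))).Monic :=
    monic_prod_of_monic _ _ fun _ _ => monic_X_sub_C _
  have hQm : Q.Monic := by
    rw [hSprod]; exact monic_prod_of_monic _ _ fun _ _ => monic_X_sub_C _
  have hdisj : Disjoint S ((Finset.range e).image (fun j => N + j)) := by
    rw [Finset.disjoint_left]
    intro a haS haI
    obtain ⟨j, _, rfl⟩ := Finset.mem_image.mp haI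
    exact absurd (hN _ haS) (by omega)
  refine ⟨hQm.mul hTm, ?_, ⟨S ∪ (Finset.range e).image (fun j => N + j), ?_, ?_⟩, ?_⟩
  · rw [hQm.natDegree_mul hTm]
    have h1 : Q.natDegree = k := by
      rw [hSprod, natDegree_prod_of_monic _ _ (fun _ _ => monic_X_sub_C _),
        Finset.sum_congr rfl (fun (a : ℕ) _ => natDegree_X_sub_C (R := ℝ) ((a : ℕ) : ℝ)),
        Finset.sum_const, smul_eq_mul, mul_one, hScard]
    have h2 : (∏ j ∈ Finset.range e, (X - C ((N + j : ℕ) : ℝ))).natDegree = e := by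
      rw [natDegree_prod_of_monic _ _ (fun _ _ => monic_X_sub_C _),
        Finset.sum_congr rfl (fun (j : ℕ) _ => natDegree_X_sub_C (R := ℝ) ((N + j : ℕ) : ℝ)),
        Finset.sum_const, smul_eq_mul, mul_one, Finset.card_range]
    rw [h1, h2]
  · rw [Finset.card_union_of_disjoint hdisj, hScard,
      Finset.card_image_of_injective _ (add_right_injective N), Finset.card_range]
  · rw [Finset.prod_union hdisj, ← hSprod, Finset.prod_image]
    intro a _ b _ hab
    simp only at hab
    omega
  · intro x
    rw [eval_mul]
    refine mul_nonneg (hnn x) ?_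
    rw [eval_prod]
    rcases lt_or_ge x N with hx | hx
    · have hcalc : (∏ j ∈ Finset.range e, eval (x : ℝ) (X - C ((N + j : ℕ) : ℝ)))
          = ∏ j ∈ Finset.range e, (((N + j : ℕ) : ℝ) - (x : ℕ)) := by
        rw [← prod_neg_even' _ (by simpa using he)
          (fun j => (((N + j : ℕ) : ℝ) - ((x : ℕ) : ℝ)))]
        refine Finset.prod_congr rfl fun j _ => ?_
        simp only [eval_sub, eval_X, eval_C]
        ring
      rw [hcalc]
      refine Finset.prod_nonneg fun j _ => ?_
      have : (x : ℕ) ≤ N + j := by omega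
      have := (Nat.cast_le (α := ℝ)).mpr this
      linarith
    · rcases lt_or_ge x (N + e) with hx2 | hx2
      · refine le_of_eq ?_
        symm
        refine Finset.prod_eq_zero (i := x - N) (Finset.mem_range.mpr (by omega)) ?_
        have hxe : N + (x - N) = x := by omega
        rw [hxe]
        simp
      · refine Finset.prod_nonneg fun j hj => ?_
        simp only [eval_sub, eval_X, eval_C]
        have : N + j ≤ x := by
          have := Finset.mem_range.mp hj; omega
        have := (Nat.cast_le (α := ℝ)).mpr this
        linarith

lemma key (n : ℕ) (m : ℕ → ℝ)
    (h : ∀ P, PolyP n P ∨ PolyP (n - 1) P → 0 ≤ Lf P m)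
    (k e : ℕ) (he : Even e) (hke : k + e = n ∨ k + e = n - 1)
    (Q : ℝ[X]) (hQ : PolyP k Q) :
    ∃ g : ℝ[X], g.natDegree ≤ e ∧ g.coeff e = Lf Q m ∧
      (1 ≤ e → g.coeff (e - 1) =
        -(e : ℝ) * Lf (X * Q) m + (∑ j ∈ Finset.range e, (j : ℝ)) * Lf Q m) ∧
      ∀ᶠ N : ℕ in atTop, 0 ≤ g.eval (N : ℝ) := by
  obtain ⟨hmon, hdeg, ⟨S, hScard, hSprod⟩, hnn⟩ := hQ
  set a : ℕ → ℝ[X] := fun j => X - C (j : ℝ) with ha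
  set D : Polynomial ℝ[X] := ∏ j ∈ Finset.range e, (X - C (a j)) with hD
  have hDm : D.Monic := monic_prod_of_monic _ _ fun _ _ => monic_X_sub_C _
  have hDdeg : D.natDegree = e := by
    rw [hD, natDegree_prod_of_monic _ _ (fun _ _ => monic_X_sub_C _),
      Finset.sum_congr rfl (fun (j : ℕ) _ => natDegree_X_sub_C (a j)),
      Finset.sum_const, smul_eq_mul, mul_one, Finset.card_range]
  set B : Polynomial ℝ[X] := C Q * D with hB
  have hBdeg : B.natDegree ≤ e := le_trans (natDegree_C_mul_le _ _) hDdeg.le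
  have hBe : B.coeff e = Q := by
    rw [hB, coeff_C_mul, ← hDdeg, hDm.coeff_natDegree, mul_one]
  have hBe1 : 1 ≤ e → B.coeff (e - 1) = Q * (-(∑ j ∈ Finset.range e, a j)) := by
    intro h1
    have hv := prod_X_sub_C_coeff_card_pred (Finset.range e) a
      (by simpa using Nat.lt_of_lt_of_le Nat.zero_lt_one h1)
    rw [Finset.card_range] at hv
    rw [hB, coeff_C_mul, ← hD] at *
    rw [hv]
  set g : ℝ[X] := ∑ t ∈ Finset.range (e + 1), C (LfL m (B.coeff t)) * X ^ t with hg
  have hgcoeff : ∀ u, g.coeff u = if u ≤ e then LfL m (B.coeff u) else 0 :=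
    fun u => coeff_mk _ e u
  have hgdeg : g.natDegree ≤ e := by
    refine natDegree_le_iff_coeff_eq_zero.mpr fun u hu => ?_
    rw [hgcoeff u, if_neg (by omega)]
  have hge : g.coeff e = Lf Q m := by
    rw [hgcoeff e, if_pos le_rfl, hBe, LfL_apply]
  have hge1 : 1 ≤ e → g.coeff (e - 1) =
      -(e : ℝ) * Lf (X * Q) m + (∑ j ∈ Finset.range e, (j : ℝ)) * Lf Q m := by
    intro h1
    rw [hgcoeff (e - 1), if_pos (by omega), hBe1 h1]
    have hrw : Q * (-(∑ j ∈ Finset.range e, a j))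
        = ∑ j ∈ Finset.range e, (-((X - C ((j : ℕ) : ℝ)) * Q)) := by
      rw [mul_neg, mul_comm, Finset.sum_mul]
      rw [← Finset.sum_neg_distrib]
    rw [hrw, map_sum]
    have hterm : ∀ j ∈ Finset.range e,
        LfL m (-((X - C ((j : ℕ) : ℝ)) * Q))
          = -(Lf (X * Q) m - (j : ℝ) * Lf Q m) := by
      intro j _
      rw [map_neg, LfL_apply, Lf_X_sub_C_mul]
    rw [Finset.sum_congr rfl hterm]
    rw [Finset.sum_neg_distrib, Finset.sum_sub_distrib, Finset.sum_const,
      Finset.card_range, ← Finset.sum_mul]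
    push_cast
    ring
  have heval : ∀ y : ℝ, g.eval y
      = LfL m (Q * ∏ j ∈ Finset.range e, (X - C (y + (j : ℕ)))) := by
    intro y
    have hBev : B.eval (C y) = Q * ∏ j ∈ Finset.range e, (X - C (y + (j : ℕ))) := by
      rw [hB, eval_mul, eval_C, hD, eval_prod]
      congr 1
      rw [← prod_neg_even _ (by simpa using he) (fun j => X - C (y + (j : ℕ)))]
      refine Finset.prod_congr rfl fun j _ => ?_
      rw [eval_sub, eval_X, eval_C, ha]
      rw [C_add]
      ring
    have hc1 : g.eval y = ∑ t ∈ Finset.range (e + 1), LfL m (B.coeff t) * y ^ t := by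
      rw [hg, eval_finset_sum]
      refine Finset.sum_congr rfl fun t _ => ?_
      rw [eval_mul, eval_C, eval_pow, eval_X]
    rw [hc1, ← hBev, eval_eq_sum_range' (lt_of_le_of_lt hBdeg (Nat.lt_succ_self e)) (C y),
      map_sum]
    refine Finset.sum_congr rfl fun t _ => ?_
    rw [← C_pow, mul_comm (B.coeff t) (C (y ^ t)), ← smul_eq_C_mul, map_smul, smul_eq_mul]
    exact mul_comm _ _
  refine ⟨g, hgdeg, hge, hge1, ?_⟩
  refine eventually_atTop.mpr ⟨S.sup id + 1, fun N hN => ?_⟩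
  have hroots : ∀ b ∈ S, b < N := by
    intro b hb
    have := Finset.le_sup (f := id) hb
    simp only [id_eq] at this
    omega
  have hP := extend k e N he Q hnn S hScard hSprod hroots
  have h0 : 0 ≤ Lf (Q * ∏ j ∈ Finset.range e, (X - C ((N + j : ℕ) : ℝ))) m := by
    rcases hke with hke | hke
    · exact h _ (Or.inl (hke ▸ hP))
    · exact h _ (Or.inr (hke ▸ hP))
  rw [heval ((N : ℕ) : ℝ)]
  have hcast : (∏ j ∈ Finset.range e, (X - C (((N : ℕ) : ℝ) + (j : ℕ))))
      = ∏ j ∈ Finset.range e, (X - C ((N + j : ℕ) : ℝ)) := by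
    refine Finset.prod_congr rfl fun j _ => ?_
    rw [Nat.cast_add]
  rw [hcast, LfL_apply]
  exact h0

lemma pos (n : ℕ) (m : ℕ → ℝ)
    (h : ∀ P, PolyP n P ∨ PolyP (n - 1) P → 0 ≤ Lf P m)
    (k : ℕ) (hk : k ≤ n) (Q : ℝ[X]) (hQ : PolyP k Q) : 0 ≤ Lf Q m := by
  set e := 2 * ((n - k) / 2) with hedef
  have he : Even e := ⟨(n - k) / 2, by omega⟩
  have hke : k + e = n ∨ k + e = n - 1 := by omega
  obtain ⟨g, hgdeg, hge, _, hev⟩ := key n m h k e he hke Q hQ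
  by_contra hneg
  push_neg at hneg
  have hne : g.coeff e ≠ 0 := by rw [hge]; exact hneg.ne
  have hdeg : g.natDegree = e := le_antisymm hgdeg (le_natDegree_of_ne_zero hne)
  have hsign := ev_sign g hev
  rw [Polynomial.leadingCoeff, hdeg, hge] at hsign
  linarith

lemma neg (n : ℕ) (m : ℕ → ℝ)
    (h : ∀ P, PolyP n P ∨ PolyP (n - 1) P → 0 ≤ Lf P m)
    (k : ℕ) (hk : k + 2 ≤ n) (Q : ℝ[X]) (hQ : PolyP k Q) (h0 : Lf Q m = 0) :
    Lf (X * Q) m ≤ 0 := by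
  set e := 2 * ((n - k) / 2) with hedef
  have he : Even e := ⟨(n - k) / 2, by omega⟩
  have hke : k + e = n ∨ k + e = n - 1 := by omega
  have he1 : 1 ≤ e := by omega
  obtain ⟨g, hgdeg, hge, hge1, hev⟩ := key n m h k e he hke Q hQ
  by_contra hpos
  push_neg at hpos
  have hc : g.coeff (e - 1) = -(e : ℝ) * Lf (X * Q) m := by
    rw [hge1 he1, h0]; ring
  have hepos : (0 : ℝ) < (e : ℝ) := by exact_mod_cast he1
  have hcneg : g.coeff (e - 1) < 0 := by
    rw [hc]; nlinarith
  have hdeg2 : g.natDegree ≤ e - 1 := by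
    refine natDegree_le_iff_coeff_eq_zero.mpr fun u hu => ?_
    rcases eq_or_ne u e with rfl | hne
    · rw [hge, h0]
    · exact coeff_eq_zero_of_natDegree_lt (lt_of_le_of_lt hgdeg (by omega))
  have hdeg3 : g.natDegree = e - 1 := le_antisymm hdeg2 (le_natDegree_of_ne_zero hcneg.ne)
  have hsign := ev_sign g hev
  rw [Polynomial.leadingCoeff, hdeg3] at hsign
  linarith

lemma mex_step (k : ℕ) (Q : ℝ[X]) (hQ : PolyP k Q) :
    ∃ r : ℕ, PolyP (k + 1) ((X - C (r : ℝ)) * Q) := by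
  obtain ⟨hmon, hdeg, ⟨S, hScard, hSprod⟩, hnn⟩ := hQ
  have hex : ∃ r : ℕ, r ∉ S := Infinite.exists_notMem_finset S
  set r := Nat.find hex with hrdef
  have hr : r ∉ S := Nat.find_spec hex
  have hrmin : ∀ x, x < r → x ∈ S := fun x hx => not_not.mp (Nat.find_min hex hx)
  refine ⟨r, (monic_X_sub_C _).mul hmon, ?_, ⟨insert r S, ?_, ?_⟩, ?_⟩
  · rw [(monic_X_sub_C _).natDegree_mul hmon, natDegree_X_sub_C, hdeg, add_comm]
  · rw [Finset.card_insert_of_notMem hr, hScard]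
  · rw [Finset.prod_insert hr, hSprod]
  · intro x
    rcases lt_or_ge x r with hx | hx
    · have hxS : x ∈ S := hrmin x hx
      have hQ0 : Q.eval ((x : ℕ) : ℝ) = 0 := by
        rw [hSprod, eval_prod]
        refine Finset.prod_eq_zero hxS ?_
        simp
      rw [eval_mul, hQ0, mul_zero]
    · rw [eval_mul, eval_sub, eval_X, eval_C]
      refine mul_nonneg ?_ (hnn x)
      have := (Nat.cast_le (α := ℝ)).mpr hx
      linarith

lemma aux_chain (n : ℕ) (m : ℕ → ℝ)
    (h : ∀ P, PolyP n P ∨ PolyP (n - 1) P → 0 ≤ Lf P m) :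
    ∀ d k Q, PolyP k Q → Lf Q m = 0 → k + d + 1 ≤ n →
      ∀ i ≤ d, Lf (X ^ i * Q) m = 0 := by
  intro d
  induction d with
  | zero =>
    intro k Q _ h0 _ i hi
    have : i = 0 := Nat.le_zero.mp hi
    subst this
    simpa using h0
  | succ d IH =>
    intro k Q hQ h0 hkd i hi
    have hk2 : k + 2 ≤ n := by omega
    obtain ⟨r, hR⟩ := mex_step k Q hQ
    have hRlf : Lf ((X - C (r : ℝ)) * Q) m = Lf (X * Q) m - (r : ℝ) * Lf Q m :=
      Lf_X_sub_C_mul m (r : ℝ) Q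
    have h1 : 0 ≤ Lf (X * Q) m := by
      have hp := pos n m h (k + 1) (by omega) _ hR
      rw [hRlf, h0] at hp
      linarith
    have h2 : Lf (X * Q) m ≤ 0 := neg n m h k hk2 Q hQ h0
    have hXQ : Lf (X * Q) m = 0 := le_antisymm h2 h1
    have hR0 : Lf ((X - C (r : ℝ)) * Q) m = 0 := by
      rw [hRlf, h0, hXQ]; ring
    have hIH := IH (k + 1) _ hR hR0 (by omega)
    have main : ∀ i, i ≤ d + 1 → Lf (X ^ i * Q) m = 0 := by
      intro i
      induction i with
      | zero => intro _; simpa using h0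
      | succ i IH2 =>
        intro hi1
        have hix : X ^ (i + 1) * Q
            = X ^ i * ((X - C (r : ℝ)) * Q) + (r : ℝ) • (X ^ i * Q) := by
          rw [smul_eq_C_mul]; ring
        rw [← LfL_apply, hix, map_add, map_smul, LfL_apply, LfL_apply, smul_eq_mul,
          hIH i (by omega), IH2 (by omega)]
        ring
    exact main i hi

end AlgebraPropAux

/-- Proposition B.2: if `L_P(m) ≥ 0` for all `P ∈ 𝒫_n ∪ 𝒫_{n-1}`, then
`L_P(m) ≥ 0` for all `P ∈ 𝒫_k`, `1 ≤ k ≤ n`; and if `Q ∈ 𝒫_k` with `k ≤ n-2`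
has `L_Q(m) = 0`, then `L_{x^i Q}(m) = 0` for `1 ≤ i ≤ n-1-k`. -/
theorem algebra_prop (n : ℕ) (hn : 2 ≤ n) (m : ℕ → ℝ) (hm0 : m 0 = 1)
    (h : ∀ P, PolyP n P ∨ PolyP (n - 1) P → 0 ≤ Lf P m) :
    (∀ k, 1 ≤ k → k ≤ n → ∀ P, PolyP k P → 0 ≤ Lf P m) ∧
      ∀ k, 1 ≤ k → k ≤ n - 2 → ∀ Q, PolyP k Q → Lf Q m = 0 →
        ∀ i, 1 ≤ i → i ≤ n - 1 - k → Lf (X ^ i * Q) m = 0 := by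
  constructor
  · intro k _ hkn P hP
    exact AlgebraPropAux.pos n m h k hkn P hP
  · intro k _ hk2 Q hQ h0 i _ hi2
    exact AlgebraPropAux.aux_chain n m h (n - 1 - k) k Q hQ h0 (by omega) i (by omega)
end
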